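/- arXiv:1312.3546 — 10 statements merged into one kernel-verified Lean document; each statement's English description precedes it below -/
import Mathlib

section
/- Non-Markov property (covariance form): if there exists j ∈ {1,…,N} with a_j ≠ 0 and H_j ≠ 1/2, then there exist real numbers 0 < s < t < u such that C(s,u)·C(t,t) ≠ C(s,t)·C(t,u). (For a centered Gaussian process this factorization identity characterizes the Markov property, so the mixed sub-fractional Brownian motion S^H(a) is not Markovian.) -/
open Real Finset
open scoped ContDiff Topology
open Filter

/-- The sub-fractional Brownian covariance. -/
noncomputable def subCov (H s t : ℝ) : ℝ :=
  s ^ (2 * H) + t ^ (2 * H) - (1 / 2) * ((s + t) ^ (2 * H) + |t - s| ^ (2 * H))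

/-- The mixed sub-fractional covariance `C(s,t) = Σ_i a_i² c_{H_i}(s,t)`. -/
noncomputable def mixedCov (N : ℕ) (a H : Fin N → ℝ) (s t : ℝ) : ℝ :=
  ∑ i, (a i) ^ 2 * subCov (H i) s t

private noncomputable def gam (N : ℕ) (a H : Fin N → ℝ) : ℝ → ℝ :=
  fun e => ∑ i, a i ^ 2 * (1 + (1 + e) ^ (2 * H i) - (1 / 2) * (2 + e) ^ (2 * H i))

private noncomputable def ww (N : ℕ) (a H : Fin N → ℝ) (u : ℝ) : ℝ → ℝ :=
  fun e => ∑ i, a i ^ 2 *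
    ((1 + e) ^ (2 * H i) + u ^ (2 * H i)
      - (1 / 2) * ((u + 1 + e) ^ (2 * H i) + (u - 1 - e) ^ (2 * H i)))

private noncomputable def vv (N : ℕ) (a H : Fin N → ℝ) : ℝ → ℝ :=
  fun e => ∑ i, a i ^ 2 * ((2 - 2 ^ (2 * H i - 1)) * (1 + e) ^ (2 * H i))

private lemma cd_rpow {s : Set ℝ} {g : ℝ → ℝ} (hg : ContDiffOn ℝ ∞ g s) (p : ℝ)
    (h : ∀ x ∈ s, g x ≠ 0) : ContDiffOn ℝ ∞ (fun e => g e ^ p) s := fun x hx =>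
  (Real.contDiffAt_rpow_const_of_ne (h x hx)).contDiffWithinAt.comp x (hg x hx)
    (Set.mapsTo_univ _ _)

/-- Non-Markov property (covariance form): if some `a_j ≠ 0` with `H_j ≠ 1/2`, then the
Gaussian Markov factorization `C(s,u) C(t,t) = C(s,t) C(t,u)` fails for some `0 < s < t < u`. -/
theorem msfbm_not_markov (N : ℕ) (a H : Fin N → ℝ)
    (hH : ∀ i, H i ∈ Set.Ioo (0 : ℝ) 1)
    (j : Fin N) (haj : a j ≠ 0) (hHj : H j ≠ 1 / 2) :
    ∃ s t u : ℝ, 0 < s ∧ s < t ∧ t < u ∧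
      mixedCov N a H s u * mixedCov N a H t t ≠
        mixedCov N a H s t * mixedCov N a H t u := by
  classical
  by_contra hcon
  push_neg at hcon
  obtain ⟨hj0, hj1⟩ := hH j
  have ha2 : ∀ i, (0:ℝ) ≤ a i ^ 2 := fun i => sq_nonneg _
  have haj2 : 0 < a j ^ 2 := by positivity
  have hsubpos : ∀ i, 0 < 2 - (2:ℝ) ^ (2 * H i - 1) := by
    intro i
    have h1 : (2:ℝ) ^ (2 * H i - 1) < 2 ^ (1:ℝ) :=
      (Real.rpow_lt_rpow_left_iff one_lt_two).mpr (by linarith [(hH i).2])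
    rw [Real.rpow_one] at h1; linarith
  have hsub11 : ∀ i, subCov (H i) 1 1 = 2 - 2 ^ (2 * H i - 1) := by
    intro i
    have h2H : 2 * H i ≠ 0 := by have := (hH i).1; positivity
    simp only [subCov, Real.one_rpow, sub_self, abs_zero, Real.zero_rpow h2H]
    rw [show (1:ℝ) + 1 = 2 by norm_num,
      show 2 * H i - 1 = 2 * H i - 1 from rfl, Real.rpow_sub two_pos, Real.rpow_one]
    ring
  have hC11 : 0 < mixedCov N a H 1 1 := by
    rw [mixedCov]
    refine Finset.sum_pos' (fun i _ => ?_) ⟨j, mem_univ j, ?_⟩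
    · rw [hsub11 i]; exact mul_nonneg (ha2 i) (hsubpos i).le
    · rw [hsub11 j]; exact mul_pos haj2 (hsubpos j)
  -- choose u close to 1 with C(1,u) > 0
  obtain ⟨u, huI, hWpos⟩ : ∃ u, u ∈ Set.Ioo (1:ℝ) 2 ∧ 0 < mixedCov N a H 1 u := by
    have hcont : ContinuousAt (fun u => mixedCov N a H 1 u) 1 := by
      simp only [mixedCov, subCov]
      refine tendsto_finset_sum _ fun i _ => ?_
      have hp : (0:ℝ) ≤ 2 * H i := by have := (hH i).1; positivity
      exact continuousAt_const.mul
        (((continuousAt_const.rpow_const (Or.inr hp)).add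
            (continuousAt_id.rpow_const (Or.inr hp))).sub
          (continuousAt_const.mul
            (((continuousAt_const.add continuousAt_id).rpow_const (Or.inr hp)).add
              (((continuousAt_id.sub continuousAt_const).abs).rpow_const (Or.inr hp)))))
    have hev : ∀ᶠ x in 𝓝 (1:ℝ), 0 < mixedCov N a H 1 x := hcont.eventually (lt_mem_nhds hC11)
    have h2 : ∀ᶠ x in 𝓝[>] (1:ℝ), x ∈ Set.Ioo (1:ℝ) 2 :=
      Ioo_mem_nhdsGT_of_mem ⟨le_refl 1, one_lt_two⟩
    obtain ⟨x, hx1, hx2⟩ := ((hev.filter_mono nhdsWithin_le_nhds).and h2).exists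
    exact ⟨x, hx2, hx1⟩
  obtain ⟨hu1, hu2⟩ := huI
  set I : Set ℝ := Set.Ioo (-(1/2 : ℝ)) (u - 1) with hIdef
  have hIopen : IsOpen I := isOpen_Ioo
  have h0I : (0:ℝ) ∈ I := ⟨by norm_num, by linarith⟩
  set sne : Finset (Fin N) := univ.filter (fun i => H i ≠ 1/2) with hsne
  set sS : Finset (Fin N) := univ.filter (fun i => a i ≠ 0 ∧ H i ≠ 1/2) with hsS
  have hjS : j ∈ sS := Finset.mem_filter.mpr ⟨mem_univ j, haj, hHj⟩
  have hSne : sS.Nonempty := ⟨j, hjS⟩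
  set q : ℝ := sS.inf' hSne (fun i => 2 * H i) with hq
  obtain ⟨i₀, hi₀S, hqi₀⟩ := sS.exists_mem_eq_inf' hSne (fun i => 2 * H i)
  rw [← hq] at hqi₀
  have hq_le : ∀ i ∈ sS, q ≤ 2 * H i := fun i hi => hq ▸ inf'_le _ hi
  have hi₀ne : H i₀ ≠ 1/2 := by
    have := Finset.mem_filter.mp hi₀S; exact this.2.2
  have hq0 : 0 < q := by rw [hqi₀]; have := (hH i₀).1; linarith
  have hq2 : q < 2 := by rw [hqi₀]; have := (hH i₀).2; linarith
  have hq1 : q ≠ 1 := by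
    rw [hqi₀]; intro hcontra; exact hi₀ne (by linarith)
  set c0 : ℝ := ∑ i ∈ univ.filter (fun i => H i = 1/2), a i ^ 2 with hc0
  set cq : ℝ := ∑ i ∈ sne.filter (fun i => 2 * H i = q), a i ^ 2 with hcq
  have hi₀sne : i₀ ∈ sne.filter (fun i => 2 * H i = q) := by
    have hm := Finset.mem_filter.mp hi₀S
    exact Finset.mem_filter.mpr ⟨Finset.mem_filter.mpr ⟨mem_univ i₀, hm.2.2⟩, hqi₀.symm⟩
  have hai₀ : a i₀ ≠ 0 := (Finset.mem_filter.mp hi₀S).2.1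
  have hcqpos : 0 < cq := by
    have h1 : a i₀ ^ 2 ≤ cq := Finset.single_le_sum (fun i _ => ha2 i) hi₀sne
    have h2 : 0 < a i₀ ^ 2 := by positivity
    linarith
  set P : ℝ → ℝ := fun e => ∑ i ∈ sne, a i ^ 2 * e ^ (2 * H i) with hP
  set C1u : ℝ := mixedCov N a H 1 u with hC1u
  set h : ℝ → ℝ := fun e =>
    2 * gam N a H e * ww N a H u e - 2 * C1u * vv N a H e - c0 * e * ww N a H u e with hh
  -- the key identity coming from the (negated) Markov factorization
  have hkey : ∀ e ∈ Set.Ioo (0:ℝ) (u - 1), P e * ww N a H u e = h e := by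
    intro e he
    obtain ⟨he0, heu⟩ := he
    have h1e : (0:ℝ) < 1 + e := by linarith
    have heq := hcon 1 (1+e) u one_pos (by linarith) (by linarith)
    have hA : mixedCov N a H (1+e) (1+e) = vv N a H e := by
      simp only [mixedCov, vv, subCov]
      refine Finset.sum_congr rfl fun i _ => ?_
      have h2H : 2 * H i ≠ 0 := by have := (hH i).1; positivity
      rw [sub_self, abs_zero, Real.zero_rpow h2H,
          show (1:ℝ)+e+(1+e) = 2*(1+e) by ring,
          Real.mul_rpow (by norm_num) h1e.le,
          Real.rpow_sub two_pos, Real.rpow_one]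
      ring
    have hB : mixedCov N a H (1+e) u = ww N a H u e := by
      simp only [mixedCov, ww, subCov]
      refine Finset.sum_congr rfl fun i _ => ?_
      rw [abs_of_pos (by linarith : (0:ℝ) < u - (1+e)),
          show (1:ℝ)+e+u = u+1+e by ring,
          show u-(1+e) = u-1-e by ring]
    have hC : mixedCov N a H 1 (1+e) = gam N a H e - (1/2) * (c0 * e + P e) := by
      have hterm : ∀ i : Fin N, a i ^ 2 * subCov (H i) 1 (1+e)
          = a i ^ 2 * (1 + (1+e)^(2*H i) - (1/2) * (2+e)^(2*H i))
            - (1/2) * (a i ^ 2 * e^(2*H i)) := by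
        intro i
        rw [subCov, Real.one_rpow, show (1:ℝ)+(1+e) = 2+e by ring,
            show (1:ℝ)+e-1 = e by ring, abs_of_pos he0]
        ring
      have hsplit : ∑ i, a i ^ 2 * e ^ (2*H i) = c0 * e + P e := by
        rw [← Finset.sum_filter_add_sum_filter_not univ (fun i => H i = 1/2)
            (fun i => a i ^ 2 * e ^ (2*H i))]
        congr 1
        · rw [hc0, Finset.sum_mul]
          refine Finset.sum_congr rfl fun i hi => ?_
          rw [(Finset.mem_filter.mp hi).2]
          norm_num [Real.rpow_one]
      rw [mixedCov, Finset.sum_congr rfl fun i _ => hterm i, Finset.sum_sub_distrib,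
          ← Finset.mul_sum, hsplit, gam]
    rw [← hC1u] at heq
    rw [hA, hB, hC] at heq
    simp only [hh]
    linear_combination 2 * heq
  have hW0 : ww N a H u 0 = C1u := by
    simp only [ww, hC1u, mixedCov, subCov]
    refine Finset.sum_congr rfl fun i _ => ?_
    rw [abs_of_pos (by linarith : (0:ℝ) < u - 1), Real.one_rpow,
        show (1:ℝ)+0 = 1 by norm_num, show u+1+(0:ℝ) = 1+u by ring,
        show u-1-(0:ℝ) = u-1 by ring, Real.one_rpow]
  have hGV0 : gam N a H 0 = vv N a H 0 := by
    simp only [gam, vv]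
    refine Finset.sum_congr rfl fun i _ => ?_
    rw [show (1:ℝ)+0 = 1 by norm_num, show (2:ℝ)+0 = 2 by norm_num, Real.one_rpow,
        Real.rpow_sub two_pos, Real.rpow_one]
    ring
  have hh0 : h 0 = 0 := by
    simp only [hh, hW0, hGV0, mul_zero, zero_mul, mul_comm]
    ring
  -- smoothness
  have hmem : ∀ x ∈ I, -(1/2:ℝ) < x ∧ x < u - 1 := fun x hx => ⟨hx.1, hx.2⟩
  have hb1 : ContDiffOn ℝ ∞ (fun e : ℝ => 1 + e) I := contDiffOn_const.add contDiffOn_id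
  have hb2 : ContDiffOn ℝ ∞ (fun e : ℝ => 2 + e) I := contDiffOn_const.add contDiffOn_id
  have hb3 : ContDiffOn ℝ ∞ (fun e : ℝ => u + 1 + e) I := contDiffOn_const.add contDiffOn_id
  have hb4 : ContDiffOn ℝ ∞ (fun e : ℝ => u - 1 - e) I := contDiffOn_const.sub contDiffOn_id
  have hn1 : ∀ x ∈ I, (1:ℝ) + x ≠ 0 := fun x hx => by have := (hmem x hx).1; intro hc; linarith
  have hn2 : ∀ x ∈ I, (2:ℝ) + x ≠ 0 := fun x hx => by have := (hmem x hx).1; intro hc; linarith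
  have hn3 : ∀ x ∈ I, u + 1 + x ≠ 0 := fun x hx => by
    have := (hmem x hx).1; intro hc; linarith
  have hn4 : ∀ x ∈ I, u - 1 - x ≠ 0 := fun x hx => by
    have := (hmem x hx).2; intro hc; linarith
  have hgam : ContDiffOn ℝ ∞ (gam N a H) I := by
    refine ContDiffOn.sum fun i _ => ?_
    exact contDiffOn_const.mul ((contDiffOn_const.add (cd_rpow hb1 (2*H i) hn1)).sub
      (contDiffOn_const.mul (cd_rpow hb2 (2*H i) hn2)))
  have hww : ContDiffOn ℝ ∞ (ww N a H u) I := by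
    refine ContDiffOn.sum fun i _ => ?_
    exact contDiffOn_const.mul (((cd_rpow hb1 (2*H i) hn1).add contDiffOn_const).sub
      (contDiffOn_const.mul ((cd_rpow hb3 (2*H i) hn3).add (cd_rpow hb4 (2*H i) hn4))))
  have hvv : ContDiffOn ℝ ∞ (vv N a H) I := by
    refine ContDiffOn.sum fun i _ => ?_
    exact contDiffOn_const.mul (contDiffOn_const.mul (cd_rpow hb1 (2*H i) hn1))
  have hsm : ContDiffOn ℝ ∞ h I := by
    simp only [hh]
    exact (((contDiffOn_const.mul hgam).mul hww).sub (contDiffOn_const.mul hvv)).sub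
      ((contDiffOn_const.mul contDiffOn_id).mul hww)
  obtain ⟨hdiff, hsm'⟩ := (contDiffOn_infty_iff_deriv_of_isOpen hIopen).mp hsm
  obtain ⟨hdiff', -⟩ := (contDiffOn_infty_iff_deriv_of_isOpen hIopen).mp hsm'
  have hder : ∀ x ∈ I, HasDerivAt h (deriv h x) x := fun x hx =>
    (hdiff.differentiableAt (hIopen.mem_nhds hx)).hasDerivAt
  -- limit of W along 0+
  have hWlim : Tendsto (ww N a H u) (𝓝[>] (0:ℝ)) (𝓝 C1u) := by
    have hcW : ContinuousAt (ww N a H u) 0 :=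
      hww.continuousOn.continuousAt (hIopen.mem_nhds h0I)
    exact hW0 ▸ hcW.tendsto.mono_left nhdsWithin_le_nhds
  -- limit of P e / e^q
  have hrpow0 : ∀ c : ℝ, 0 < c → Tendsto (fun e : ℝ => e ^ c) (𝓝[>] (0:ℝ)) (𝓝 0) := by
    intro c hc
    have hcont : ContinuousAt (fun e : ℝ => e ^ c) 0 :=
      Real.continuousAt_rpow_const 0 c (Or.inr hc.le)
    have h0 : (0:ℝ) ^ c = 0 := Real.zero_rpow hc.ne'
    have := hcont.tendsto.mono_left (nhdsWithin_le_nhds (s := Set.Ioi (0:ℝ)))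
    rwa [h0] at this
  have hPq : Tendsto (fun e => P e / e ^ q) (𝓝[>] (0:ℝ)) (𝓝 cq) := by
    have hcq_eq : cq = ∑ i ∈ sne, (if 2 * H i = q then a i ^ 2 else 0) := by
      rw [hcq]; exact Finset.sum_filter _ _
    have hterm : ∀ i ∈ sne, Tendsto (fun e : ℝ => a i ^ 2 * e ^ (2 * H i - q))
        (𝓝[>] (0:ℝ)) (𝓝 (if 2 * H i = q then a i ^ 2 else 0)) := by
      intro i hi
      by_cases h1 : 2 * H i = q
      · simp only [h1, sub_self, Real.rpow_zero, mul_one, if_pos h1]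
        exact tendsto_const_nhds
      · rw [if_neg h1]
        by_cases h2 : a i = 0
        · simp only [h2, ne_eq, OfNat.ofNat_ne_zero, not_false_eq_true, zero_pow, zero_mul]
          exact tendsto_const_nhds
        · have hiS : i ∈ sS :=
            Finset.mem_filter.mpr ⟨mem_univ i, h2, (Finset.mem_filter.mp hi).2⟩
          have hlt : 0 < 2 * H i - q := by
            have hle := hq_le i hiS
            rcases lt_or_eq_of_le hle with h | h
            · linarith
            · exact absurd h.symm h1
          simpa using (hrpow0 _ hlt).const_mul (a i ^ 2)
    have hsum := tendsto_finset_sum sne hterm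
    rw [← hcq_eq] at hsum
    refine Tendsto.congr' ?_ hsum
    filter_upwards [self_mem_nhdsWithin] with e he
    have he0 : (0:ℝ) < e := he
    simp only [hP, Finset.sum_div]
    refine Finset.sum_congr rfl fun i _ => ?_
    rw [Real.rpow_sub he0, mul_div_assoc]
  have hmemIoo : ∀ᶠ e in 𝓝[>] (0:ℝ), e ∈ Set.Ioo (0:ℝ) (u - 1) :=
    Ioo_mem_nhdsGT_of_mem ⟨le_refl 0, by linarith⟩
  have hlimA : Tendsto (fun e => h e / e ^ q) (𝓝[>] (0:ℝ)) (𝓝 (cq * C1u)) := by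
    refine Tendsto.congr' ?_ (hPq.mul hWlim)
    filter_upwards [hmemIoo] with e he
    rw [← hkey e he]; ring
  have hslope : Tendsto (fun e => h e / e) (𝓝[>] (0:ℝ)) (𝓝 (deriv h 0)) := by
    have h1 := hasDerivAt_iff_tendsto_slope.mp (hder 0 h0I)
    have hsub : Set.Ioi (0:ℝ) ⊆ {(0:ℝ)}ᶜ := fun x hx => ne_of_gt hx
    have h2 := h1.mono_left (nhdsWithin_mono (0:ℝ) hsub)
    refine h2.congr fun e => ?_
    rw [slope_def_field, hh0, sub_zero, sub_zero]
  have hcontra : cq * C1u ≠ 0 := by positivity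
  rcases lt_or_gt_of_ne hq1 with hqlt | hqgt
  · -- case q < 1
    have hlim0 : Tendsto (fun e => h e / e ^ q) (𝓝[>] (0:ℝ)) (𝓝 0) := by
      have hpow : Tendsto (fun e : ℝ => e ^ (1 - q)) (𝓝[>] (0:ℝ)) (𝓝 0) :=
        hrpow0 _ (by linarith)
      have hmul := hslope.mul hpow
      rw [mul_zero] at hmul
      refine Tendsto.congr' ?_ hmul
      filter_upwards [self_mem_nhdsWithin] with e he
      have he0 : (0:ℝ) < e := he
      have hqe : e ^ q ≠ 0 := (Real.rpow_pos_of_pos he0 q).ne'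
      rw [Real.rpow_sub he0, Real.rpow_one]
      field_simp
    exact hcontra (tendsto_nhds_unique hlimA hlim0)
  · -- case q > 1
    have hd0 : deriv h 0 = 0 := by
      have hterm : ∀ i ∈ sne, Tendsto (fun e : ℝ => a i ^ 2 * e ^ (2 * H i - 1))
          (𝓝[>] (0:ℝ)) (𝓝 0) := by
        intro i hi
        by_cases h2 : a i = 0
        · simp only [h2, ne_eq, OfNat.ofNat_ne_zero, not_false_eq_true, zero_pow, zero_mul]
          exact tendsto_const_nhds
        · have hiS : i ∈ sS :=
            Finset.mem_filter.mpr ⟨mem_univ i, h2, (Finset.mem_filter.mp hi).2⟩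
          have hlt : 0 < 2 * H i - 1 := by have := hq_le i hiS; linarith
          simpa using (hrpow0 _ hlt).const_mul (a i ^ 2)
      have hsum := tendsto_finset_sum sne hterm
      rw [Finset.sum_const, smul_zero] at hsum
      have hPe : Tendsto (fun e => P e / e) (𝓝[>] (0:ℝ)) (𝓝 0) := by
        refine Tendsto.congr' ?_ hsum
        filter_upwards [self_mem_nhdsWithin] with e he
        have he0 : (0:ℝ) < e := he
        simp only [hP, Finset.sum_div]
        refine Finset.sum_congr rfl fun i _ => ?_
        rw [show (2 * H i - 1 : ℝ) = 2 * H i - 1 from rfl, Real.rpow_sub he0,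
          Real.rpow_one, mul_div_assoc]
      have hhe : Tendsto (fun e => h e / e) (𝓝[>] (0:ℝ)) (𝓝 (0 * C1u)) := by
        refine Tendsto.congr' ?_ (hPe.mul hWlim)
        filter_upwards [hmemIoo] with e he
        rw [← hkey e he]; ring
      rw [zero_mul] at hhe
      exact tendsto_nhds_unique hslope hhe
    have hlim0 : Tendsto (fun e => h e / e ^ q) (𝓝[>] (0:ℝ)) (𝓝 0) := by
      have hdd : DifferentiableAt ℝ (deriv h) 0 := hdiff'.differentiableAt (hIopen.mem_nhds h0I)
      have hslope2 := hasDerivAt_iff_tendsto_slope.mp hdd.hasDerivAt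
      set K : ℝ := |deriv (deriv h) 0| + 1 with hK
      have hKpos : 0 < K := by rw [hK]; positivity
      have hev2 : ∀ᶠ x in 𝓝[≠] (0:ℝ), |slope (deriv h) 0 x - deriv (deriv h) 0| < 1 := by
        have := Metric.tendsto_nhds.mp hslope2 1 one_pos
        simpa [Real.dist_eq] using this
      have hev3 : ∀ᶠ x in 𝓝[≠] (0:ℝ), |deriv h x| ≤ K * |x| := by
        filter_upwards [hev2, self_mem_nhdsWithin] with x hx hxne
        have hxne' : x ≠ 0 := hxne
        rw [slope_def_field, hd0, sub_zero, sub_zero] at hx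
        have h1 : |deriv h x / x| < K := by
          have h2 := abs_sub_abs_le_abs_sub (deriv h x / x) (deriv (deriv h) 0)
          rw [hK]; linarith
        rw [abs_div] at h1
        exact ((div_lt_iff₀ (abs_pos.mpr hxne')).mp h1).le
      rw [eventually_nhdsWithin_iff] at hev3
      obtain ⟨δ, hδpos, hδ⟩ := Metric.eventually_nhds_iff.mp hev3
      have hbnd : ∀ᶠ e in 𝓝[>] (0:ℝ), |h e| ≤ K * e * e := by
        have hmin : (0:ℝ) < min δ (u - 1) := lt_min hδpos (by linarith)
        filter_upwards [Ioo_mem_nhdsGT_of_mem (Set.mem_Ico.mpr ⟨le_refl (0:ℝ), hmin⟩)]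
          with e he
        obtain ⟨he0, helt⟩ := he
        have heδ : e < δ := lt_of_lt_of_le helt (min_le_left _ _)
        have heu : e < u - 1 := lt_of_lt_of_le helt (min_le_right _ _)
        have hIcc : Set.Icc (0:ℝ) e ⊆ I := fun x hx =>
          Set.mem_Ioo.mpr ⟨by linarith [hx.1], by linarith [hx.2]⟩
        have hderiv : ∀ x ∈ Set.Icc (0:ℝ) e, HasDerivWithinAt h (deriv h x) (Set.Icc 0 e) x :=
          fun x hx => (hder x (hIcc hx)).hasDerivWithinAt
        have hbound : ∀ x ∈ Set.Ico (0:ℝ) e, ‖deriv h x‖ ≤ K * e := by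
          intro x hx
          rcases eq_or_lt_of_le hx.1 with heq | hlt
          · rw [Real.norm_eq_abs, ← heq, hd0, abs_zero]
            positivity
          · have h1 : |deriv h x| ≤ K * |x| := by
              refine hδ ?_ (ne_of_gt hlt)
              rw [Real.dist_eq, sub_zero, abs_of_pos hlt]
              linarith [hx.2]
            rw [abs_of_pos hlt] at h1
            rw [Real.norm_eq_abs]
            nlinarith [hx.2]
        have hmvt := norm_image_sub_le_of_norm_deriv_le_segment' hderiv hbound e
          (Set.mem_Icc.mpr ⟨he0.le, le_refl e⟩)
        rw [hh0, sub_zero, sub_zero, Real.norm_eq_abs] at hmvt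
        exact hmvt
      have hg : Tendsto (fun e : ℝ => K * e ^ ((2:ℝ) - q)) (𝓝[>] (0:ℝ)) (𝓝 0) := by
        have := (hrpow0 _ (by linarith : (0:ℝ) < 2 - q)).const_mul K
        rwa [mul_zero] at this
      refine squeeze_zero_norm' ?_ hg
      filter_upwards [hbnd, self_mem_nhdsWithin] with e hbe he
      have he0 : (0:ℝ) < e := he
      have hq0' : (0:ℝ) < e ^ q := Real.rpow_pos_of_pos he0 q
      have h2 : e ^ ((2:ℝ)) = e * e := by
        rw [show (2:ℝ) = ((2:ℕ):ℝ) by norm_num, Real.rpow_natCast]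
        ring
      have heq2 : K * e ^ ((2:ℝ) - q) = K * e * e / e ^ q := by
        rw [Real.rpow_sub he0, h2, ← mul_div_assoc, ← mul_assoc]
      rw [heq2, Real.norm_eq_abs, abs_div, abs_of_pos hq0']
      exact (div_le_div_iff_of_pos_right hq0').mpr hbe
    exact hcontra (tendsto_nhds_unique hlimA hlim0)
end

section
/- Sign of the increment correlations: let a ∈ ℝ^N \ {0} and 0 ≤ u < v ≤ s < t. Then (1) C_{u,v,s,t} = 0 if H_i = 1/2 for every i ∈ {1,…,N}; (2) C_{u,v,s,t} > 0 if H_i > 1/2 for every i ∈ {1,…,N}; (3) C_{u,v,s,t} < 0 if H_i < 1/2 for every i ∈ {1,…,N}. -/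
open Real Finset

-- derivative of x ↦ (y+x)^p + (y-x)^p
lemma g_hasDeriv (p y x : ℝ) (h1 : 0 < y + x) (h2 : 0 < y - x) :
    HasDerivAt (fun x => (y + x) ^ p + (y - x) ^ p)
      (p * ((y + x) ^ (p - 1) - (y - x) ^ (p - 1))) x := by
  have d1 : HasDerivAt (fun x : ℝ => (y + x) ^ p) (p * (y + x) ^ (p - 1) * 1) x :=
    (Real.hasDerivAt_rpow_const (Or.inl h1.ne')).comp x ((hasDerivAt_id x).const_add y)
  have d2 : HasDerivAt (fun x : ℝ => (y - x) ^ p) (p * (y - x) ^ (p - 1) * (-1)) x :=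
    (Real.hasDerivAt_rpow_const (Or.inl h2.ne')).comp x ((hasDerivAt_id x).const_sub y)
  have := d1.add d2
  refine this.congr_deriv ?_
  ring

lemma m_lt (p u v y : ℝ) (hp0 : 0 < p) (hp1 : p < 1) (hu : 0 ≤ u) (huv : u < v)
    (hvy : v < y) : (y + v) ^ p + (y - v) ^ p < (y + u) ^ p + (y - u) ^ p := by
  have key : StrictAntiOn (fun x => (y + x) ^ p + (y - x) ^ p) (Set.Icc u v) := by
    apply strictAntiOn_of_deriv_neg (convex_Icc u v)
    · apply ContinuousOn.add
      · exact (continuousOn_const.add continuousOn_id).rpow_const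
          (fun x _ => Or.inr hp0.le)
      · exact (continuousOn_const.sub continuousOn_id).rpow_const
          (fun x _ => Or.inr hp0.le)
    · intro x hx
      rw [interior_Icc] at hx
      have hx1 : 0 < y + x := by cases hx; linarith
      have hx2 : 0 < y - x := by cases hx; linarith
      rw [(g_hasDeriv p y x hx1 hx2).deriv]
      have : (y + x) ^ (p - 1) < (y - x) ^ (p - 1) := by
        apply Real.rpow_lt_rpow_of_neg hx2 (by cases hx; linarith) (by linarith)
      nlinarith
  exact key (Set.mem_Icc.2 ⟨le_refl u, huv.le⟩) (Set.mem_Icc.2 ⟨huv.le, le_refl v⟩) huv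

lemma m_gt (p u v y : ℝ) (hp0 : p < 0) (hu : 0 ≤ u) (huv : u < v)
    (hvy : v < y) : (y + u) ^ p + (y - u) ^ p < (y + v) ^ p + (y - v) ^ p := by
  have key : StrictMonoOn (fun x => (y + x) ^ p + (y - x) ^ p) (Set.Icc u v) := by
    apply strictMonoOn_of_deriv_pos (convex_Icc u v)
    · apply ContinuousOn.add
      · refine (continuousOn_const.add continuousOn_id).rpow_const (fun x hx => Or.inl ?_)
        rw [Set.mem_Icc] at hx; intro h; simp only [id, Pi.add_apply] at h; nlinarith [hx.1, hx.2]
      · refine (continuousOn_const.sub continuousOn_id).rpow_const (fun x hx => Or.inl ?_)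
        rw [Set.mem_Icc] at hx; intro h; simp only [id, Pi.sub_apply] at h; nlinarith [hx.1, hx.2]
    · intro x hx
      rw [interior_Icc] at hx
      have hx1 : 0 < y + x := by cases hx; linarith
      have hx2 : 0 < y - x := by cases hx; linarith
      rw [(g_hasDeriv p y x hx1 hx2).deriv]
      have : (y + x) ^ (p - 1) < (y - x) ^ (p - 1) := by
        apply Real.rpow_lt_rpow_of_neg hx2 (by cases hx; linarith) (by linarith)
      nlinarith
  exact key (Set.mem_Icc.2 ⟨le_refl u, huv.le⟩) (Set.mem_Icc.2 ⟨huv.le, le_refl v⟩) huv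

noncomputable def Kf (H u v y : ℝ) : ℝ :=
  (v + y) ^ (2 * H) + (y - v) ^ (2 * H) - (u + y) ^ (2 * H) - (y - u) ^ (2 * H)

lemma Kf_hasDeriv (H u v y : ℝ) (hu : 0 ≤ u) (huv : u < v) (hvy : v < y) :
    HasDerivAt (Kf H u v)
      (2 * H * ((y + v) ^ (2 * H - 1) + (y - v) ^ (2 * H - 1)
        - (y + u) ^ (2 * H - 1) - (y - u) ^ (2 * H - 1))) y := by
  have hvy' : (0:ℝ) < v + y := by linarith
  have huy : (0:ℝ) < u + y := by linarith
  have hyv : (0:ℝ) < y - v := by linarith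
  have hyu : (0:ℝ) < y - u := by linarith
  have d1 : HasDerivAt (fun y : ℝ => (v + y) ^ (2 * H)) (2 * H * (v + y) ^ (2 * H - 1) * 1) y :=
    (Real.hasDerivAt_rpow_const (Or.inl hvy'.ne')).comp y ((hasDerivAt_id y).const_add v)
  have d2 : HasDerivAt (fun y : ℝ => (y - v) ^ (2 * H)) (2 * H * (y - v) ^ (2 * H - 1) * 1) y :=
    (Real.hasDerivAt_rpow_const (Or.inl hyv.ne')).comp (h₂ := fun x : ℝ => x ^ (2 * H)) y ((hasDerivAt_id y).sub_const v)
  have d3 : HasDerivAt (fun y : ℝ => (u + y) ^ (2 * H)) (2 * H * (u + y) ^ (2 * H - 1) * 1) y :=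
    (Real.hasDerivAt_rpow_const (Or.inl huy.ne')).comp y ((hasDerivAt_id y).const_add u)
  have d4 : HasDerivAt (fun y : ℝ => (y - u) ^ (2 * H)) (2 * H * (y - u) ^ (2 * H - 1) * 1) y :=
    (Real.hasDerivAt_rpow_const (Or.inl hyu.ne')).comp (h₂ := fun x : ℝ => x ^ (2 * H)) y ((hasDerivAt_id y).sub_const u)
  have := ((d1.add d2).sub d3).sub d4
  refine this.congr_deriv ?_
  rw [add_comm v y, add_comm u y]
  ring

lemma Kf_cont (H u v s t : ℝ) (hH : 0 < H) :
    ContinuousOn (Kf H u v) (Set.Icc s t) := by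
  unfold Kf
  apply ContinuousOn.sub
  apply ContinuousOn.sub
  apply ContinuousOn.add
  · exact (continuousOn_const.add continuousOn_id).rpow_const (fun x _ => Or.inr (by linarith))
  · exact (continuousOn_id.sub continuousOn_const).rpow_const (fun x _ => Or.inr (by linarith))
  · exact (continuousOn_const.add continuousOn_id).rpow_const (fun x _ => Or.inr (by linarith))
  · exact (continuousOn_id.sub continuousOn_const).rpow_const (fun x _ => Or.inr (by linarith))

lemma Kf_anti (H u v s t : ℝ) (hH1 : 1 / 2 < H) (hH2 : H < 1)
    (hu : 0 ≤ u) (huv : u < v) (hvs : v ≤ s) (hst : s < t) :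
    Kf H u v t < Kf H u v s := by
  have key : StrictAntiOn (Kf H u v) (Set.Icc s t) := by
    apply strictAntiOn_of_deriv_neg (convex_Icc s t) (Kf_cont H u v s t (by linarith))
    intro y hy
    rw [interior_Icc, Set.mem_Ioo] at hy
    have hvy : v < y := lt_of_le_of_lt hvs hy.1
    rw [(Kf_hasDeriv H u v y hu huv hvy).deriv]
    have := m_lt (2 * H - 1) u v y (by linarith) (by linarith) hu huv hvy
    nlinarith
  exact key (Set.mem_Icc.2 ⟨le_refl s, hst.le⟩) (Set.mem_Icc.2 ⟨hst.le, le_refl t⟩) hst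

lemma Kf_mono (H u v s t : ℝ) (hH1 : 0 < H) (hH2 : H < 1 / 2)
    (hu : 0 ≤ u) (huv : u < v) (hvs : v ≤ s) (hst : s < t) :
    Kf H u v s < Kf H u v t := by
  have key : StrictMonoOn (Kf H u v) (Set.Icc s t) := by
    apply strictMonoOn_of_deriv_pos (convex_Icc s t) (Kf_cont H u v s t hH1)
    intro y hy
    rw [interior_Icc, Set.mem_Ioo] at hy
    have hvy : v < y := lt_of_le_of_lt hvs hy.1
    rw [(Kf_hasDeriv H u v y hu huv hvy).deriv]
    have := m_gt (2 * H - 1) u v y (by linarith) hu huv hvy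
    nlinarith
  exact key (Set.mem_Icc.2 ⟨le_refl s, hst.le⟩) (Set.mem_Icc.2 ⟨hst.le, le_refl t⟩) hst

lemma inc_eq (H u v s t : ℝ) (hu : 0 ≤ u) (huv : u < v) (hvs : v ≤ s) (hst : s < t) :
    subCov H v t - subCov H v s - subCov H u t + subCov H u s
      = (1 / 2) * (Kf H u v s - Kf H u v t) := by
  unfold subCov Kf
  rw [abs_of_nonneg (by linarith : (0:ℝ) ≤ t - v), abs_of_nonneg (by linarith : (0:ℝ) ≤ s - v),
    abs_of_nonneg (by linarith : (0:ℝ) ≤ t - u), abs_of_nonneg (by linarith : (0:ℝ) ≤ s - u)]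
  ring

lemma subCov_half (s t : ℝ) (hst : s ≤ t) :
    subCov (1 / 2) s t = s := by
  have h2 : (2:ℝ) * (1 / 2) = 1 := by norm_num
  rw [subCov, h2, Real.rpow_one, Real.rpow_one, Real.rpow_one,
    abs_of_nonneg (by linarith : (0:ℝ) ≤ t - s), Real.rpow_one]
  ring

/-- The covariance of increments on non-overlapping intervals. -/
noncomputable def incCov (N : ℕ) (a H : Fin N → ℝ) (u v s t : ℝ) : ℝ :=
  mixedCov N a H v t - mixedCov N a H v s - mixedCov N a H u t + mixedCov N a H u s

/-- Sign of the increment correlations of the msfBm: zero if all `H_i = 1/2`,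
positive if all `H_i > 1/2`, negative if all `H_i < 1/2`. -/
theorem msfbm_increment_covariance_sign (N : ℕ) (a H : Fin N → ℝ)
    (hH : ∀ i, H i ∈ Set.Ioo (0 : ℝ) 1) (ha : a ≠ 0)
    (u v s t : ℝ) (hu : 0 ≤ u) (huv : u < v) (hvs : v ≤ s) (hst : s < t) :
    ((∀ i, H i = 1 / 2) → incCov N a H u v s t = 0) ∧
    ((∀ i, 1 / 2 < H i) → 0 < incCov N a H u v s t) ∧
    ((∀ i, H i < 1 / 2) → incCov N a H u v s t < 0) := by
  have hrw : incCov N a H u v s t = ∑ i, (a i) ^ 2 *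
      (subCov (H i) v t - subCov (H i) v s - subCov (H i) u t + subCov (H i) u s) := by
    simp only [incCov, mixedCov, ← Finset.sum_sub_distrib, ← Finset.sum_add_distrib]
    exact Finset.sum_congr rfl (fun i _ => by ring)
  obtain ⟨i0, hi0⟩ := Function.ne_iff.1 ha
  have hi0' : 0 < (a i0) ^ 2 := by rw [← sq_abs]; exact pow_pos (abs_pos.2 hi0) 2
  refine ⟨fun h => ?_, fun h => ?_, fun h => ?_⟩
  · rw [hrw]
    apply Finset.sum_eq_zero
    intro i _
    rw [h i, subCov_half v t (by linarith), subCov_half v s hvs,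
      subCov_half u t (by linarith), subCov_half u s (by linarith)]
    ring
  · rw [hrw]
    apply Finset.sum_pos' _ ⟨i0, Finset.mem_univ i0, ?_⟩
    · intro i _
      apply mul_nonneg (sq_nonneg _)
      rw [inc_eq (H i) u v s t hu huv hvs hst]
      have := Kf_anti (H i) u v s t (h i) (hH i).2 hu huv hvs hst
      linarith
    · apply mul_pos hi0'
      rw [inc_eq (H i0) u v s t hu huv hvs hst]
      have := Kf_anti (H i0) u v s t (h i0) (hH i0).2 hu huv hvs hst
      linarith
  · rw [hrw]
    have : ∑ i, (a i) ^ 2 *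
        (subCov (H i) v t - subCov (H i) v s - subCov (H i) u t + subCov (H i) u s)
        = -∑ i, (a i) ^ 2 *
        (-(subCov (H i) v t - subCov (H i) v s - subCov (H i) u t + subCov (H i) u s)) := by
      rw [← Finset.sum_neg_distrib]
      exact Finset.sum_congr rfl (fun i _ => by ring)
    rw [this, neg_lt_zero]
    apply Finset.sum_pos' _ ⟨i0, Finset.mem_univ i0, ?_⟩
    · intro i _
      apply mul_nonneg (sq_nonneg _)
      rw [inc_eq (H i) u v s t hu huv hvs hst]
      have := Kf_mono (H i) u v s t (hH i).1 (h i) hu huv hvs hst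
      linarith
    · apply mul_pos hi0'
      rw [inc_eq (H i0) u v s t hu huv hvs hst]
      have := Kf_mono (H i0) u v s t (hH i0).1 (h i0) hu huv hvs hst
      linarith
end

section
/- Monotonicity of the increment covariance in a coefficient: fix 0 ≤ u < v ≤ s < t, an index i ∈ {1,…,N}, the other coefficients (a_j)_{j≠i}, and real numbers b, c with |b| < |c|. Write C_{u,v,s,t}(x) for the increment covariance computed with the i-th coefficient equal to x. Then C_{u,v,s,t}(b) < C_{u,v,s,t}(c) if H_i > 1/2; C_{u,v,s,t}(b) = C_{u,v,s,t}(c) if H_i = 1/2; and C_{u,v,s,t}(b) > C_{u,v,s,t}(c) if H_i < 1/2. -/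
open Real Finset

/-- Inner comparison, positive exponent case: `w ↦ (x+w)^q + (x-w)^q` is strictly
decreasing for `0 < q < 1`. -/
lemma psi_lt {q x u v : ℝ} (hu : 0 ≤ u) (huv : u < v) (hvx : v < x)
    (hq0 : 0 < q) (hq1 : q < 1) :
    (x + v) ^ q + (x - v) ^ q < (x + u) ^ q + (x - u) ^ q := by
  have hx : 0 < x := lt_of_le_of_lt (hu.trans huv.le) hvx
  have key : StrictAntiOn (fun w : ℝ => (x + w) ^ q + (x - w) ^ q) (Set.Icc u v) := by
    apply strictAntiOn_of_deriv_neg (convex_Icc u v)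
    · apply ContinuousOn.add
      · apply ContinuousOn.rpow_const (by fun_prop)
        intro w hw
        exact Or.inl (by nlinarith [hw.1])
      · apply ContinuousOn.rpow_const (by fun_prop)
        intro w hw
        exact Or.inl (by nlinarith [hw.2])
    · intro w hw
      rw [interior_Icc] at hw
      have hw1 : 0 < x + w := by nlinarith [hw.1]
      have hw2 : 0 < x - w := by nlinarith [hw.2]
      have d1 : HasDerivAt (fun w : ℝ => (x + w) ^ q) (1 * q * (x + w) ^ (q - 1)) w :=
        ((hasDerivAt_id w).const_add x).rpow_const (Or.inl hw1.ne')
      have d2 : HasDerivAt (fun w : ℝ => (x - w) ^ q) ((-1) * q * (x - w) ^ (q - 1)) w :=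
        ((hasDerivAt_id w).const_sub x).rpow_const (Or.inl hw2.ne')
      rw [(show HasDerivAt (fun w => (x + w) ^ q + (x - w) ^ q)
        (1 * q * (x + w) ^ (q - 1) + (-1) * q * (x - w) ^ (q - 1)) w from d1.add d2).deriv]
      have hlt : (x + w) ^ (q - 1) < (x - w) ^ (q - 1) := by
        apply Real.rpow_lt_rpow_of_neg hw2 (by nlinarith [hw.1, hu]) (by linarith)
      nlinarith
  have := key (by constructor <;> [exact le_refl u; exact huv.le])
    (by constructor <;> [exact huv.le; exact le_refl v]) huv
  simpa using this

/-- Inner comparison, negative exponent case: `w ↦ (x+w)^q + (x-w)^q` is strictly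
increasing for `q < 0`. -/
lemma psi_gt {q x u v : ℝ} (hu : 0 ≤ u) (huv : u < v) (hvx : v < x)
    (hq0 : q < 0) :
    (x + u) ^ q + (x - u) ^ q < (x + v) ^ q + (x - v) ^ q := by
  have hx : 0 < x := lt_of_le_of_lt (hu.trans huv.le) hvx
  have key : StrictMonoOn (fun w : ℝ => (x + w) ^ q + (x - w) ^ q) (Set.Icc u v) := by
    apply strictMonoOn_of_deriv_pos (convex_Icc u v)
    · apply ContinuousOn.add
      · apply ContinuousOn.rpow_const (by fun_prop)
        intro w hw
        exact Or.inl (by nlinarith [hw.1])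
      · apply ContinuousOn.rpow_const (by fun_prop)
        intro w hw
        exact Or.inl (by nlinarith [hw.2])
    · intro w hw
      rw [interior_Icc] at hw
      have hw1 : 0 < x + w := by nlinarith [hw.1]
      have hw2 : 0 < x - w := by nlinarith [hw.2]
      have d1 : HasDerivAt (fun w : ℝ => (x + w) ^ q) (1 * q * (x + w) ^ (q - 1)) w :=
        ((hasDerivAt_id w).const_add x).rpow_const (Or.inl hw1.ne')
      have d2 : HasDerivAt (fun w : ℝ => (x - w) ^ q) ((-1) * q * (x - w) ^ (q - 1)) w :=
        ((hasDerivAt_id w).const_sub x).rpow_const (Or.inl hw2.ne')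
      rw [(show HasDerivAt (fun w => (x + w) ^ q + (x - w) ^ q)
        (1 * q * (x + w) ^ (q - 1) + (-1) * q * (x - w) ^ (q - 1)) w from d1.add d2).deriv]
      have hlt : (x + w) ^ (q - 1) < (x - w) ^ (q - 1) := by
        apply Real.rpow_lt_rpow_of_neg hw2 (by nlinarith [hw.1, hu]) (by linarith)
      nlinarith
  have := key (by constructor <;> [exact le_refl u; exact huv.le])
    (by constructor <;> [exact huv.le; exact le_refl v]) huv
  simpa using this

/-- Outer comparison: the double increment of `F(w,x) = (x+w)^p + (x-w)^p`. -/
lemma outer_lt {p u v s t : ℝ} (hu : 0 ≤ u) (huv : u < v) (hvs : v ≤ s) (hst : s < t)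
    (hp1 : 1 < p) (hp2 : p < 2) :
    (t + v) ^ p + (t - v) ^ p - (t + u) ^ p - (t - u) ^ p
      < (s + v) ^ p + (s - v) ^ p - (s + u) ^ p - (s - u) ^ p := by
  have hv : 0 < v := lt_of_le_of_lt hu huv
  have key : StrictAntiOn
      (fun x : ℝ => (x + v) ^ p + (x - v) ^ p - (x + u) ^ p - (x - u) ^ p)
      (Set.Icc s t) := by
    apply strictAntiOn_of_deriv_neg (convex_Icc s t)
    · have hcont : ∀ w : ℝ, ContinuousOn (fun x : ℝ => (x + w) ^ p) (Set.Icc s t) := by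
        intro w
        exact ContinuousOn.rpow_const (by fun_prop) (fun x _ => Or.inr (by linarith))
      have hcont2 : ∀ w : ℝ, ContinuousOn (fun x : ℝ => (x - w) ^ p) (Set.Icc s t) := by
        intro w
        exact ContinuousOn.rpow_const (by fun_prop) (fun x _ => Or.inr (by linarith))
      exact (((hcont v).add (hcont2 v)).sub (hcont u)).sub (hcont2 u)
    · intro x hx
      rw [interior_Icc] at hx
      have hvx : v < x := lt_of_le_of_lt hvs hx.1
      have hux : u < x := huv.trans hvx
      have h1 : 0 < x + v := by linarith
      have h2 : 0 < x - v := by linarith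
      have h3 : 0 < x + u := by linarith
      have h4 : 0 < x - u := by linarith
      have d1 : HasDerivAt (fun x : ℝ => (x + v) ^ p) (1 * p * (x + v) ^ (p - 1)) x :=
        ((hasDerivAt_id x).add_const v).rpow_const (Or.inl h1.ne')
      have d2 : HasDerivAt (fun x : ℝ => (x - v) ^ p) (1 * p * (x - v) ^ (p - 1)) x :=
        ((hasDerivAt_id x).sub_const v).rpow_const (Or.inl h2.ne')
      have d3 : HasDerivAt (fun x : ℝ => (x + u) ^ p) (1 * p * (x + u) ^ (p - 1)) x :=
        ((hasDerivAt_id x).add_const u).rpow_const (Or.inl h3.ne')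
      have d4 : HasDerivAt (fun x : ℝ => (x - u) ^ p) (1 * p * (x - u) ^ (p - 1)) x :=
        ((hasDerivAt_id x).sub_const u).rpow_const (Or.inl h4.ne')
      rw [(show HasDerivAt
        (fun x => (x + v) ^ p + (x - v) ^ p - (x + u) ^ p - (x - u) ^ p)
        (1 * p * (x + v) ^ (p - 1) + 1 * p * (x - v) ^ (p - 1) - 1 * p * (x + u) ^ (p - 1)
          - 1 * p * (x - u) ^ (p - 1)) x from ((d1.add d2).sub d3).sub d4).deriv]
      have hpsi : (x + v) ^ (p - 1) + (x - v) ^ (p - 1)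
          < (x + u) ^ (p - 1) + (x - u) ^ (p - 1) :=
        psi_lt hu huv hvx (by linarith) (by linarith)
      nlinarith
  exact key (Set.left_mem_Icc.2 hst.le)
    (Set.right_mem_Icc.2 hst.le) hst

lemma outer_gt {p u v s t : ℝ} (hu : 0 ≤ u) (huv : u < v) (hvs : v ≤ s) (hst : s < t)
    (hp0 : 0 < p) (hp1 : p < 1) :
    (s + v) ^ p + (s - v) ^ p - (s + u) ^ p - (s - u) ^ p
      < (t + v) ^ p + (t - v) ^ p - (t + u) ^ p - (t - u) ^ p := by
  have hv : 0 < v := lt_of_le_of_lt hu huv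
  have key : StrictMonoOn
      (fun x : ℝ => (x + v) ^ p + (x - v) ^ p - (x + u) ^ p - (x - u) ^ p)
      (Set.Icc s t) := by
    apply strictMonoOn_of_deriv_pos (convex_Icc s t)
    · have hcont : ∀ w : ℝ, ContinuousOn (fun x : ℝ => (x + w) ^ p) (Set.Icc s t) := by
        intro w
        apply ContinuousOn.rpow_const (by fun_prop) (fun x _ => Or.inr hp0.le)
      have hcont2 : ∀ w : ℝ, ContinuousOn (fun x : ℝ => (x - w) ^ p) (Set.Icc s t) := by
        intro w
        apply ContinuousOn.rpow_const (by fun_prop) (fun x _ => Or.inr hp0.le)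
      exact (((hcont v).add (hcont2 v)).sub (hcont u)).sub (hcont2 u)
    · intro x hx
      rw [interior_Icc] at hx
      have hvx : v < x := lt_of_le_of_lt hvs hx.1
      have hux : u < x := huv.trans hvx
      have h1 : 0 < x + v := by linarith
      have h2 : 0 < x - v := by linarith
      have h3 : 0 < x + u := by linarith
      have h4 : 0 < x - u := by linarith
      have d1 : HasDerivAt (fun x : ℝ => (x + v) ^ p) (1 * p * (x + v) ^ (p - 1)) x :=
        ((hasDerivAt_id x).add_const v).rpow_const (Or.inl h1.ne')
      have d2 : HasDerivAt (fun x : ℝ => (x - v) ^ p) (1 * p * (x - v) ^ (p - 1)) x :=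
        ((hasDerivAt_id x).sub_const v).rpow_const (Or.inl h2.ne')
      have d3 : HasDerivAt (fun x : ℝ => (x + u) ^ p) (1 * p * (x + u) ^ (p - 1)) x :=
        ((hasDerivAt_id x).add_const u).rpow_const (Or.inl h3.ne')
      have d4 : HasDerivAt (fun x : ℝ => (x - u) ^ p) (1 * p * (x - u) ^ (p - 1)) x :=
        ((hasDerivAt_id x).sub_const u).rpow_const (Or.inl h4.ne')
      rw [(show HasDerivAt
        (fun x => (x + v) ^ p + (x - v) ^ p - (x + u) ^ p - (x - u) ^ p)
        (1 * p * (x + v) ^ (p - 1) + 1 * p * (x - v) ^ (p - 1) - 1 * p * (x + u) ^ (p - 1)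
          - 1 * p * (x - u) ^ (p - 1)) x from ((d1.add d2).sub d3).sub d4).deriv]
      have hpsi : (x + u) ^ (p - 1) + (x - u) ^ (p - 1)
          < (x + v) ^ (p - 1) + (x - v) ^ (p - 1) :=
        psi_gt hu huv hvx (by linarith)
      nlinarith
  exact key (Set.left_mem_Icc.2 hst.le)
    (Set.right_mem_Icc.2 hst.le) hst

/-- The single-Hurst increment covariance as an explicit expression. -/
lemma subCov_inc_eq {h u v s t : ℝ} (hu : 0 ≤ u) (huv : u < v) (hvs : v ≤ s) (hst : s < t) :
    subCov h v t - subCov h v s - subCov h u t + subCov h u s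
      = -(1 / 2) * (((t + v) ^ (2 * h) + (t - v) ^ (2 * h) - (t + u) ^ (2 * h)
            - (t - u) ^ (2 * h))
        - ((s + v) ^ (2 * h) + (s - v) ^ (2 * h) - (s + u) ^ (2 * h)
            - (s - u) ^ (2 * h))) := by
  unfold subCov
  rw [abs_of_nonneg (by linarith : (0:ℝ) ≤ t - v), abs_of_nonneg (by linarith : (0:ℝ) ≤ s - v),
    abs_of_nonneg (by linarith : (0:ℝ) ≤ t - u), abs_of_nonneg (by linarith : (0:ℝ) ≤ s - u)]
  rw [show v + t = t + v by ring, show v + s = s + v by ring,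
    show u + t = t + u by ring, show u + s = s + u by ring]
  ring

lemma incCov_update (N : ℕ) (a H : Fin N → ℝ) (u v s t : ℝ) (i : Fin N) (x : ℝ) :
    incCov N (Function.update a i x) H u v s t
      = incCov N (Function.update a i 0) H u v s t
        + x ^ 2 * (subCov (H i) v t - subCov (H i) v s
            - subCov (H i) u t + subCov (H i) u s) := by
  have key : ∀ (y s' t' : ℝ), mixedCov N (Function.update a i y) H s' t'
      = y ^ 2 * subCov (H i) s' t' + ∑ j ∈ univ \ {i}, (a j) ^ 2 * subCov (H j) s' t' := by
    intro y s' t'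
    unfold mixedCov
    have : (fun j => (Function.update a i y j) ^ 2 * subCov (H j) s' t')
        = Function.update (fun j => (a j) ^ 2 * subCov (H j) s' t') i
            (y ^ 2 * subCov (H i) s' t') := by
      funext j
      rcases eq_or_ne j i with rfl | hj
      · simp
      · simp [Function.update_of_ne hj]
    rw [this, Finset.sum_update_of_mem (mem_univ i)]
  unfold incCov
  rw [key, key, key, key, key, key, key, key]
  ring

/-- Monotonicity of the increment covariance in the `i`-th coefficient: with `|b| < |c|`,
`C_{u,v,s,t}(b) < C_{u,v,s,t}(c)` if `H_i > 1/2`, `=` if `H_i = 1/2`, `>` if `H_i < 1/2`,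
where `C_{u,v,s,t}(x)` is computed with the `i`-th coefficient of `a` replaced by `x`. -/
theorem msfbm_increment_covariance_coeff_monotone (N : ℕ) (a H : Fin N → ℝ)
    (hH : ∀ i, H i ∈ Set.Ioo (0 : ℝ) 1)
    (u v s t : ℝ) (hu : 0 ≤ u) (huv : u < v) (hvs : v ≤ s) (hst : s < t)
    (i : Fin N) (b c : ℝ) (hbc : |b| < |c|) :
    (1 / 2 < H i →
      incCov N (Function.update a i b) H u v s t
        < incCov N (Function.update a i c) H u v s t) ∧
    (H i = 1 / 2 →
      incCov N (Function.update a i b) H u v s t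
        = incCov N (Function.update a i c) H u v s t) ∧
    (H i < 1 / 2 →
      incCov N (Function.update a i c) H u v s t
        < incCov N (Function.update a i b) H u v s t) := by
  have hb2 : b ^ 2 < c ^ 2 := by
    rw [← sq_abs b, ← sq_abs c]
    exact pow_lt_pow_left₀ hbc (abs_nonneg b) (by norm_num)
  set D := subCov (H i) v t - subCov (H i) v s - subCov (H i) u t + subCov (H i) u s with hD
  have hDeq := subCov_inc_eq (h := H i) hu huv hvs hst
  rw [incCov_update N a H u v s t i b, incCov_update N a H u v s t i c]
  obtain ⟨hH0, hH1⟩ := hH i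
  refine ⟨fun h => ?_, fun h => ?_, fun h => ?_⟩
  · have hDpos : 0 < D := by
      rw [hD, hDeq]
      have := outer_lt (p := 2 * H i) hu huv hvs hst (by linarith) (by linarith)
      nlinarith
    nlinarith
  · have hD0 : D = 0 := by
      rw [hD, hDeq, h]
      norm_num
    rw [← hD, hD0]; ring
  · have hDneg : D < 0 := by
      rw [hD, hDeq]
      have := outer_gt (p := 2 * H i) hu huv hvs hst (by linarith) (by linarith)
      nlinarith
    nlinarith
end

section
/- Asymptotics of the unit-increment covariance: let a ∈ ℝ^N \ {0}, let H* = max{H_i : 1 ≤ i ≤ N, a_i ≠ 0}, and fix a natural number p. Then, as the integer n tends to infinity, n^{3−2H*} · ( C(p,n) − Σ_{i=1}^N 2(1−H_i)H_i(2H_i−1)(2p+1) a_i² n^{2H_i−3} ) tends to 0; i.e. C(p,n) = Σ_{i=1}^N [ 2(1−H_i)H_i(2H_i−1)(2p+1) a_i² n^{2H_i−3} + o(n^{2H_i−3}) ]. -/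
open Real Finset Filter Topology

/-- The unit-increment covariance
`C(x,n) = Cov(S_{x+1}^H − S_x^H, S_{x+n+1}^H − S_{x+n}^H)`. -/
noncomputable def unitCov (N : ℕ) (a H : Fin N → ℝ) (x : ℝ) (n : ℕ) : ℝ :=
  mixedCov N a H (x + 1) (x + n + 1) - mixedCov N a H (x + 1) (x + n)
    - mixedCov N a H x (x + n + 1) + mixedCov N a H x (x + n)

section Auxiliary

open Set Topology

lemma hasDerivAt_shape (e q x : ℝ) (hx : 0 < x) (hq : 0 < q) :
    HasDerivAt (fun y : ℝ => y ^ e - (y + q) ^ e) (e * x ^ (e - 1) - e * (x + q) ^ (e - 1)) x := by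
  have h1 := Real.hasDerivAt_rpow_const (x := x) (p := e) (Or.inl hx.ne')
  have h2 : HasDerivAt (fun y : ℝ => (y + q) ^ e) (e * (x + q) ^ (e - 1)) x := by
    have hb := Real.hasDerivAt_rpow_const (x := x + q) (p := e) (Or.inl (by positivity))
    have hadd : HasDerivAt (fun y : ℝ => y + q) 1 x := (hasDerivAt_id x).add_const q
    have h3 := hb.comp x hadd
    rw [mul_one] at h3
    exact h3
  exact h1.sub h2

lemma W_antitoneOn (b q c1 c2 : ℝ) (hb : b < 0) (hq : 0 < q) (hc : 0 < c1) :
    AntitoneOn (fun x : ℝ => x ^ b - (x + q) ^ b) (Icc c1 c2) := by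
  apply antitoneOn_of_deriv_nonpos (convex_Icc c1 c2)
  · intro x hx
    exact (hasDerivAt_shape b q x (lt_of_lt_of_le hc hx.1) hq).continuousAt.continuousWithinAt
  · intro x hx
    rw [interior_Icc] at hx
    exact (hasDerivAt_shape b q x (lt_trans hc hx.1) hq).differentiableAt.differentiableWithinAt
  · intro x hx
    rw [interior_Icc] at hx
    have hx0 : 0 < x := lt_trans hc hx.1
    rw [(hasDerivAt_shape b q x hx0 hq).deriv]
    have h1 : (x + q) ^ (b - 1) ≤ x ^ (b - 1) :=
      Real.rpow_le_rpow_of_nonpos hx0 (by linarith) (by linarith)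
    nlinarith

lemma le_secondDiff {f f' f'' : ℝ → ℝ} {c m : ℝ}
    (h1 : ∀ x ∈ Icc (c - 1) (c + 1), HasDerivAt f (f' x) x)
    (h2 : ∀ x ∈ Icc (c - 1) (c + 1), HasDerivAt f' (f'' x) x)
    (hm : ∀ x ∈ Icc (c - 1) (c + 1), m ≤ f'' x) :
    m ≤ f (c + 1) - 2 * f c + f (c - 1) := by
  set F : ℝ → ℝ := fun x => f x - m / 2 * x ^ 2 with hF
  set G : ℝ → ℝ := fun x => f' x - m * x with hG
  have hsub : Icc c (c + 1) ⊆ Icc (c - 1) (c + 1) := Icc_subset_Icc (by linarith) le_rfl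
  have hsub' : Icc (c - 1) c ⊆ Icc (c - 1) (c + 1) := Icc_subset_Icc le_rfl (by linarith)
  have hD1 : ∀ x ∈ Icc (c - 1) (c + 1), HasDerivAt F (G x) x := by
    intro x hx
    have : HasDerivAt (fun y : ℝ => m / 2 * y ^ 2) (m * x) x := by
      have h := (hasDerivAt_pow 2 x).const_mul (m / 2)
      exact h.congr_deriv (by norm_num; ring)
    exact (h1 x hx).sub this
  have hGmono : MonotoneOn G (Icc (c - 1) (c + 1)) := by
    apply monotoneOn_of_deriv_nonneg (convex_Icc _ _)
    · intro x hx
      exact ((h2 x hx).sub ((hasDerivAt_id x).const_mul m)).continuousAt.continuousWithinAt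
    · intro x hx
      rw [interior_Icc] at hx
      exact ((h2 x (Ioo_subset_Icc_self hx)).sub
        ((hasDerivAt_id x).const_mul m)).differentiableAt.differentiableWithinAt
    · intro x hx
      rw [interior_Icc] at hx
      have hder : HasDerivAt G (f'' x - m) x := by
        have h := (h2 x (Ioo_subset_Icc_self hx)).sub ((hasDerivAt_id x).const_mul m)
        exact h.congr_deriv (by ring)
      rw [hder.deriv]
      have := hm x (Ioo_subset_Icc_self hx)
      linarith
  obtain ⟨x1, hx1, hv1⟩ := exists_hasDerivAt_eq_slope F G (by linarith : c < c + 1)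
    (fun x hx => (hD1 x (hsub hx)).continuousAt.continuousWithinAt)
    (fun x hx => hD1 x (hsub (Ioo_subset_Icc_self hx)))
  obtain ⟨x2, hx2, hv2⟩ := exists_hasDerivAt_eq_slope F G (by linarith : c - 1 < c)
    (fun x hx => (hD1 x (hsub' hx)).continuousAt.continuousWithinAt)
    (fun x hx => hD1 x (hsub' (Ioo_subset_Icc_self hx)))
  have hle : G x2 ≤ G x1 :=
    hGmono (hsub' (Ioo_subset_Icc_self hx2)) (hsub (Ioo_subset_Icc_self hx1))
      (le_of_lt (lt_trans hx2.2 hx1.1))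
  rw [hv1, hv2] at hle
  have e1 : (c + 1 - c) = (1:ℝ) := by ring
  have e2 : (c - (c - 1)) = (1:ℝ) := by ring
  rw [e1, e2, div_one, div_one] at hle
  have : F (c + 1) - 2 * F c + F (c - 1) ≥ 0 := by linarith
  simp only [hF] at this
  nlinarith [this]

lemma lim_aux (al q c : ℝ) :
    Tendsto (fun n : ℕ => (n : ℝ) ^ (1 - al) * (((n : ℝ) + c) ^ al - ((n : ℝ) + c + q) ^ al))
      atTop (𝓝 (-(q * al))) := by
  set u : ℝ → ℝ := fun h => (1 + c * h) ^ al - (1 + (c + q) * h) ^ al with hu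
  have hu1 : HasDerivAt (fun h : ℝ => (1 + c * h) ^ al) (c * al) 0 := by
    have hin : HasDerivAt (fun h : ℝ => 1 + c * h) c 0 := by
      simpa using ((hasDerivAt_id (0:ℝ)).const_mul c).const_add 1
    have := hin.rpow_const (p := al) (by norm_num)
    simpa using this
  have hu2 : HasDerivAt (fun h : ℝ => (1 + (c + q) * h) ^ al) ((c + q) * al) 0 := by
    have hin : HasDerivAt (fun h : ℝ => 1 + (c + q) * h) (c + q) 0 := by
      simpa using ((hasDerivAt_id (0:ℝ)).const_mul (c + q)).const_add 1
    have := hin.rpow_const (p := al) (by norm_num)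
    simpa using this
  have hd : HasDerivAt u (-(q * al)) 0 := by
    have h := hu1.sub hu2
    exact h.congr_deriv (by ring)
  rw [hasDerivAt_iff_tendsto_slope] at hd
  have hn : Tendsto (fun n : ℕ => ((n : ℝ))⁻¹) atTop (𝓝[≠] (0:ℝ)) := by
    apply tendsto_nhdsWithin_of_tendsto_nhds_of_eventually_within
    · exact tendsto_inv_atTop_zero.comp tendsto_natCast_atTop_atTop
    · filter_upwards [eventually_ge_atTop 1] with n hn
      have : (0:ℝ) < (n:ℝ) := by exact_mod_cast hn
      simp [this.ne']
  have hcomp := hd.comp hn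
  apply hcomp.congr'
  filter_upwards [eventually_gt_atTop (Nat.ceil ((1:ℝ) + |c| + |q|))] with n hn
  have hnR : (1:ℝ) + |c| + |q| < (n:ℝ) := lt_of_le_of_lt (Nat.le_ceil _) (by exact_mod_cast hn)
  have hn0 : (0:ℝ) < (n:ℝ) := by nlinarith [abs_nonneg c, abs_nonneg q]
  have hnc : (0:ℝ) < (n:ℝ) + c := by nlinarith [neg_abs_le c, abs_nonneg q]
  have hncq : (0:ℝ) < (n:ℝ) + c + q := by nlinarith [neg_abs_le c, neg_abs_le q]
  have e1 : (1:ℝ) + c * (n:ℝ)⁻¹ = ((n:ℝ) + c) * (n:ℝ)⁻¹ := by field_simp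
  have e2 : (1:ℝ) + (c + q) * (n:ℝ)⁻¹ = ((n:ℝ) + c + q) * (n:ℝ)⁻¹ := by field_simp; ring
  have r1 : ((1:ℝ) + c * (n:ℝ)⁻¹) ^ al = ((n:ℝ) + c) ^ al * ((n:ℝ)) ^ (-al) := by
    rw [e1, Real.mul_rpow hnc.le (by positivity), Real.inv_rpow hn0.le, ← Real.rpow_neg hn0.le]
  have r2 : ((1:ℝ) + (c + q) * (n:ℝ)⁻¹) ^ al = ((n:ℝ) + c + q) ^ al * ((n:ℝ)) ^ (-al) := by
    rw [e2, Real.mul_rpow hncq.le (by positivity), Real.inv_rpow hn0.le, ← Real.rpow_neg hn0.le]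
  have r3 : (n:ℝ) ^ ((1:ℝ) - al) = (n:ℝ) * (n:ℝ) ^ (-al) := by
    rw [show (1:ℝ) - al = 1 + (-al) by ring, Real.rpow_add hn0, Real.rpow_one]
  show slope u 0 ((n:ℝ)⁻¹) = (n:ℝ) ^ ((1:ℝ) - al) * (((n:ℝ) + c) ^ al - ((n:ℝ) + c + q) ^ al)
  rw [slope_def_field, hu]
  simp only []
  rw [r1, r2, r3]
  have hu0 : ((1:ℝ) + c * 0) ^ al - ((1:ℝ) + (c + q) * 0) ^ al = 0 := by norm_num
  rw [hu0]
  field_simp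
  ring

/-- The double second-difference appearing in the unit-increment covariance. -/
noncomputable def dd (H q x : ℝ) : ℝ :=
  ((x + 1) ^ (2 * H) - (x + 1 + q) ^ (2 * H)) - 2 * (x ^ (2 * H) - (x + q) ^ (2 * H))
    + ((x - 1) ^ (2 * H) - (x - 1 + q) ^ (2 * H))

lemma key (H q : ℝ) (hH0 : 0 < H) (hH1 : H < 1) (hq : 1 ≤ q) :
    Tendsto (fun n : ℕ => (n : ℝ) ^ (3 - 2 * H) * ((1 / 2) * dd H q n)) atTop
      (𝓝 (2 * (1 - H) * H * (2 * H - 1) * q)) := by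
  have hq0 : (0:ℝ) < q := lt_of_lt_of_le one_pos hq
  set f : ℝ → ℝ := fun y => y ^ (2 * H) - (y + q) ^ (2 * H) with hf
  set f1 : ℝ → ℝ := fun y => (2 * H) * (y ^ (2 * H - 1) - (y + q) ^ (2 * H - 1)) with hf1
  set f2 : ℝ → ℝ := fun y => 2 * H * ((2 * H - 1) * (y ^ (2 * H - 2) - (y + q) ^ (2 * H - 2)))
    with hf2
  have hdf : ∀ x : ℝ, 0 < x → HasDerivAt f (f1 x) x := by
    intro x hx
    have h := hasDerivAt_shape (2 * H) q x hx hq0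
    convert h using 1
    simp only [hf1]; ring
  have hdf1 : ∀ x : ℝ, 0 < x → HasDerivAt f1 (f2 x) x := by
    intro x hx
    have h := (hasDerivAt_shape (2 * H - 1) q x hx hq0).const_mul (2 * H)
    rw [show 2 * H - 1 - 1 = 2 * H - 2 by ring] at h
    exact h.congr_deriv (by simp only [hf2]; ring)
  have hf2eq : ∀ x : ℝ, f2 x = (2 * H * (2 * H - 1)) * (x ^ (2 * H - 2) - (x + q) ^ (2 * H - 2)) := by
    intro x; simp only [hf2]; ring
  have hddf : ∀ x : ℝ, dd H q x = f (x + 1) - 2 * f x + f (x - 1) := fun x => rfl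
  have hsand : ∀ n : ℕ, 2 ≤ n →
      min (f2 ((n:ℝ) - 1)) (f2 ((n:ℝ) + 1)) ≤ dd H q (n:ℝ) ∧
        dd H q (n:ℝ) ≤ max (f2 ((n:ℝ) - 1)) (f2 ((n:ℝ) + 1)) := by
    intro n hn
    have hn2 : (2:ℝ) ≤ (n:ℝ) := by exact_mod_cast hn
    have hWanti := W_antitoneOn (2 * H - 2) q ((n:ℝ) - 1) ((n:ℝ) + 1) (by linarith) hq0
      (by linarith)
    have hmem1 : (n:ℝ) - 1 ∈ Icc ((n:ℝ) - 1) ((n:ℝ) + 1) := by constructor <;> linarith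
    have hmem2 : (n:ℝ) + 1 ∈ Icc ((n:ℝ) - 1) ((n:ℝ) + 1) := by constructor <;> linarith
    have hbounds : ∀ x ∈ Icc ((n:ℝ) - 1) ((n:ℝ) + 1),
        min (f2 ((n:ℝ) - 1)) (f2 ((n:ℝ) + 1)) ≤ f2 x ∧
          f2 x ≤ max (f2 ((n:ℝ) - 1)) (f2 ((n:ℝ) + 1)) := by
      intro x hx
      have hW1 := hWanti hmem1 hx hx.1
      have hW2 := hWanti hx hmem2 hx.2
      simp only at hW1 hW2
      rw [hf2eq x, hf2eq ((n:ℝ) - 1), hf2eq ((n:ℝ) + 1)]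
      rcases le_or_gt 0 (2 * H * (2 * H - 1)) with hK | hK
      · constructor
        · exact le_trans (min_le_right _ _) (by nlinarith)
        · exact le_trans (by nlinarith) (le_max_left _ _)
      · constructor
        · exact le_trans (min_le_left _ _) (by nlinarith)
        · exact le_trans (by nlinarith) (le_max_right _ _)
    have hpos : ∀ x ∈ Icc ((n:ℝ) - 1) ((n:ℝ) + 1), (0:ℝ) < x := by
      intro x hx; have := hx.1; linarith
    have h1 : ∀ x ∈ Icc ((n:ℝ) - 1) ((n:ℝ) + 1), HasDerivAt f (f1 x) x :=
      fun x hx => hdf x (hpos x hx)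
    have h2 : ∀ x ∈ Icc ((n:ℝ) - 1) ((n:ℝ) + 1), HasDerivAt f1 (f2 x) x :=
      fun x hx => hdf1 x (hpos x hx)
    constructor
    · rw [hddf]
      exact le_secondDiff h1 h2 (fun x hx => (hbounds x hx).1)
    · rw [hddf]
      have hneg := le_secondDiff (f := fun y => -f y) (f' := fun y => -f1 y)
        (f'' := fun y => -f2 y) (c := (n:ℝ))
        (m := -(max (f2 ((n:ℝ) - 1)) (f2 ((n:ℝ) + 1))))
        (fun x hx => (h1 x hx).neg) (fun x hx => (h2 x hx).neg)
        (fun x hx => by have := (hbounds x hx).2; linarith)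
      linarith
  have hlim : ∀ c : ℝ, Tendsto (fun n : ℕ => (n:ℝ) ^ (3 - 2 * H) * ((1/2) * f2 ((n:ℝ) + c)))
      atTop (𝓝 (2 * (1 - H) * H * (2 * H - 1) * q)) := by
    intro c
    have h := (lim_aux (2 * H - 2) q c).const_mul (H * (2 * H - 1))
    have h2 : Tendsto (fun n : ℕ => (n:ℝ) ^ (3 - 2 * H) * ((1/2) * f2 ((n:ℝ) + c))) atTop
        (𝓝 (H * (2 * H - 1) * -(q * (2 * H - 2)))) := by
      apply h.congr
      intro n
      simp only [hf2, show (1:ℝ) - (2 * H - 2) = 3 - 2 * H by ring]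
      ring
    convert h2 using 2
    ring
  have hlimL : Tendsto (fun n : ℕ => min ((n:ℝ) ^ (3 - 2 * H) * ((1/2) * f2 ((n:ℝ) - 1)))
      ((n:ℝ) ^ (3 - 2 * H) * ((1/2) * f2 ((n:ℝ) + 1)))) atTop
      (𝓝 (2 * (1 - H) * H * (2 * H - 1) * q)) := by
    have hm1 : Tendsto (fun n : ℕ => (n:ℝ) ^ (3 - 2 * H) * ((1/2) * f2 ((n:ℝ) - 1))) atTop
        (𝓝 (2 * (1 - H) * H * (2 * H - 1) * q)) :=
      (hlim (-1)).congr (fun n => by rw [← sub_eq_add_neg])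
    have := hm1.min (hlim 1)
    rwa [min_self] at this
  have hlimU : Tendsto (fun n : ℕ => max ((n:ℝ) ^ (3 - 2 * H) * ((1/2) * f2 ((n:ℝ) - 1)))
      ((n:ℝ) ^ (3 - 2 * H) * ((1/2) * f2 ((n:ℝ) + 1)))) atTop
      (𝓝 (2 * (1 - H) * H * (2 * H - 1) * q)) := by
    have hm1 : Tendsto (fun n : ℕ => (n:ℝ) ^ (3 - 2 * H) * ((1/2) * f2 ((n:ℝ) - 1))) atTop
        (𝓝 (2 * (1 - H) * H * (2 * H - 1) * q)) :=
      (hlim (-1)).congr (fun n => by rw [← sub_eq_add_neg])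
    have := hm1.max (hlim 1)
    rwa [max_self] at this
  apply tendsto_of_tendsto_of_tendsto_of_le_of_le' hlimL hlimU
  · filter_upwards [eventually_ge_atTop 2] with n hn
    have hd := (hsand n hn).1
    have hrp : (0:ℝ) ≤ (n:ℝ) ^ (3 - 2 * H) := Real.rpow_nonneg (Nat.cast_nonneg n) _
    rcases le_total (f2 ((n:ℝ) - 1)) (f2 ((n:ℝ) + 1)) with h | h
    · rw [min_eq_left h] at hd
      refine le_trans (min_le_left _ _) ?_
      exact mul_le_mul_of_nonneg_left (by linarith) hrp
    · rw [min_eq_right h] at hd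
      refine le_trans (min_le_right _ _) ?_
      exact mul_le_mul_of_nonneg_left (by linarith) hrp
  · filter_upwards [eventually_ge_atTop 2] with n hn
    have hd := (hsand n hn).2
    have hrp : (0:ℝ) ≤ (n:ℝ) ^ (3 - 2 * H) := Real.rpow_nonneg (Nat.cast_nonneg n) _
    rcases le_total (f2 ((n:ℝ) - 1)) (f2 ((n:ℝ) + 1)) with h | h
    · rw [max_eq_right h] at hd
      refine le_trans ?_ (le_max_right _ _)
      exact mul_le_mul_of_nonneg_left (by linarith) hrp
    · rw [max_eq_left h] at hd
      refine le_trans ?_ (le_max_left _ _)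
      exact mul_le_mul_of_nonneg_left (by linarith) hrp

lemma subCov_combo (Hi : ℝ) (p n : ℕ) (hn : 1 ≤ n) :
    subCov Hi ((p:ℝ) + 1) ((p:ℝ) + (n:ℝ) + 1) - subCov Hi ((p:ℝ) + 1) ((p:ℝ) + (n:ℝ))
      - subCov Hi (p:ℝ) ((p:ℝ) + (n:ℝ) + 1) + subCov Hi (p:ℝ) ((p:ℝ) + (n:ℝ))
      = (1/2) * dd Hi (2*(p:ℝ)+1) (n:ℝ) := by
  have hn1 : (1:ℝ) ≤ (n:ℝ) := by exact_mod_cast hn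
  simp only [subCov, dd]
  rw [show (p:ℝ) + (n:ℝ) + 1 - ((p:ℝ) + 1) = (n:ℝ) by ring]
  rw [show (p:ℝ) + (n:ℝ) - ((p:ℝ) + 1) = (n:ℝ) - 1 by ring]
  rw [show (p:ℝ) + (n:ℝ) + 1 - (p:ℝ) = (n:ℝ) + 1 by ring]
  rw [show (p:ℝ) + (n:ℝ) - (p:ℝ) = (n:ℝ) by ring]
  rw [abs_of_nonneg (by linarith : (0:ℝ) ≤ (n:ℝ))]
  rw [abs_of_nonneg (by linarith : (0:ℝ) ≤ (n:ℝ) - 1)]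
  rw [abs_of_nonneg (by linarith : (0:ℝ) ≤ (n:ℝ) + 1)]
  rw [show (p:ℝ) + 1 + ((p:ℝ) + (n:ℝ) + 1) = (n:ℝ) + 1 + (2*(p:ℝ)+1) by ring]
  rw [show (p:ℝ) + 1 + ((p:ℝ) + (n:ℝ)) = (n:ℝ) + (2*(p:ℝ)+1) by ring]
  rw [show (p:ℝ) + ((p:ℝ) + (n:ℝ) + 1) = (n:ℝ) + (2*(p:ℝ)+1) by ring]
  rw [show (p:ℝ) + ((p:ℝ) + (n:ℝ)) = (n:ℝ) - 1 + (2*(p:ℝ)+1) by ring]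
  ring

lemma unitCov_sum (N : ℕ) (a H : Fin N → ℝ) (p n : ℕ) (hn : 1 ≤ n) :
    unitCov N a H (p:ℝ) n = ∑ i, (a i) ^ 2 * ((1/2) * dd (H i) (2*(p:ℝ)+1) (n:ℝ)) := by
  unfold unitCov mixedCov
  rw [← Finset.sum_sub_distrib, ← Finset.sum_sub_distrib, ← Finset.sum_add_distrib]
  refine Finset.sum_congr rfl fun i _ => ?_
  rw [← mul_sub, ← mul_sub, ← mul_add, subCov_combo (H i) p n hn]

end Auxiliary

/-- Asymptotics of the unit-increment covariance: with
`H* = max{H_i : a_i ≠ 0}`, as `n → ∞`,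
`C(p,n) = Σ_i [2(1−H_i)H_i(2H_i−1)(2p+1) a_i² n^{2H_i−3} + o(n^{2H_i−3})]`, i.e.
`n^{3−2H*}·(C(p,n) − Σ_i 2(1−H_i)H_i(2H_i−1)(2p+1) a_i² n^{2H_i−3}) → 0`. -/
theorem msfbm_unit_increment_covariance_asymptotics (N : ℕ) (a H : Fin N → ℝ)
    (hH : ∀ i, H i ∈ Set.Ioo (0 : ℝ) 1) (ha : a ≠ 0)
    (Hstar : ℝ) (hHstar : IsGreatest {h : ℝ | ∃ i, a i ≠ 0 ∧ H i = h} Hstar)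
    (p : ℕ) :
    Tendsto (fun n : ℕ =>
        (n : ℝ) ^ (3 - 2 * Hstar) *
          (unitCov N a H (p : ℝ) n -
            ∑ i, 2 * (1 - H i) * H i * (2 * H i - 1) * (2 * (p : ℝ) + 1) * (a i) ^ 2 *
              (n : ℝ) ^ (2 * H i - 3)))
      atTop (nhds 0) := by
  have hq1 : (1:ℝ) ≤ 2 * (p:ℝ) + 1 := by
    have : (0:ℝ) ≤ (p:ℝ) := Nat.cast_nonneg p
    linarith
  have hterm : ∀ i : Fin N, Tendsto (fun n : ℕ => (n:ℝ) ^ (3 - 2 * Hstar) *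
      ((a i) ^ 2 * ((1/2) * dd (H i) (2*(p:ℝ)+1) (n:ℝ)) -
        2 * (1 - H i) * H i * (2 * H i - 1) * (2 * (p:ℝ) + 1) * (a i) ^ 2 *
          (n:ℝ) ^ (2 * H i - 3))) atTop (𝓝 0) := by
    intro i
    rcases eq_or_ne (a i) 0 with hai | hai
    · simpa [hai] using (tendsto_const_nhds : Tendsto (fun _ : ℕ => (0:ℝ)) atTop (𝓝 0))
    · have hle : H i ≤ Hstar := hHstar.2 ⟨i, hai, rfl⟩
      have hK := key (H i) (2*(p:ℝ)+1) (hH i).1 (hH i).2 hq1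
      set C : ℝ := 2 * (1 - H i) * H i * (2 * H i - 1) * (2 * (p:ℝ) + 1) with hC
      have hK0 : Tendsto (fun n : ℕ =>
          (a i) ^ 2 * |(n:ℝ) ^ (3 - 2 * H i) * ((1/2) * dd (H i) (2*(p:ℝ)+1) (n:ℝ)) - C|)
          atTop (𝓝 0) := by
        have h1 := hK.sub_const C
        rw [sub_self] at h1
        have h2 := h1.abs
        rw [abs_zero] at h2
        simpa using h2.const_mul ((a i) ^ 2)
      apply squeeze_zero_norm' ?_ hK0
      filter_upwards [eventually_ge_atTop 1] with n hn
      have hn1 : (1:ℝ) ≤ (n:ℝ) := by exact_mod_cast hn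
      have hn0 : (0:ℝ) < (n:ℝ) := by linarith
      have efac : (n:ℝ) ^ (3 - 2 * Hstar) =
          (n:ℝ) ^ (2 * H i - 2 * Hstar) * (n:ℝ) ^ (3 - 2 * H i) := by
        rw [← Real.rpow_add hn0]; ring_nf
      have efac2 : (n:ℝ) ^ (3 - 2 * Hstar) * (n:ℝ) ^ (2 * H i - 3) =
          (n:ℝ) ^ (2 * H i - 2 * Hstar) := by
        rw [← Real.rpow_add hn0]; ring_nf
      have hexpr : (n:ℝ) ^ (3 - 2 * Hstar) *
          ((a i) ^ 2 * ((1/2) * dd (H i) (2*(p:ℝ)+1) (n:ℝ)) -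
            C * (a i) ^ 2 * (n:ℝ) ^ (2 * H i - 3)) =
          (n:ℝ) ^ (2 * H i - 2 * Hstar) *
            ((a i) ^ 2 * ((n:ℝ) ^ (3 - 2 * H i) * ((1/2) * dd (H i) (2*(p:ℝ)+1) (n:ℝ)) - C)) := by
        linear_combination ((a i) ^ 2 * ((1/2) * dd (H i) (2*(p:ℝ)+1) (n:ℝ))) * efac -
          C * (a i) ^ 2 * efac2
      rw [show 2 * (1 - H i) * H i * (2 * H i - 1) * (2 * (p:ℝ) + 1) * (a i) ^ 2 *
          (n:ℝ) ^ (2 * H i - 3) = C * (a i) ^ 2 * (n:ℝ) ^ (2 * H i - 3) from by rw [hC]]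
      rw [hexpr]
      have hY0 : (0:ℝ) ≤ (n:ℝ) ^ (2 * H i - 2 * Hstar) := Real.rpow_nonneg hn0.le _
      have hY1 : (n:ℝ) ^ (2 * H i - 2 * Hstar) ≤ 1 :=
        Real.rpow_le_one_of_one_le_of_nonpos hn1 (by linarith)
      rw [Real.norm_eq_abs, abs_mul, abs_mul, abs_of_nonneg hY0, abs_of_nonneg (sq_nonneg _)]
      calc (n:ℝ) ^ (2 * H i - 2 * Hstar) *
            ((a i) ^ 2 * |(n:ℝ) ^ (3 - 2 * H i) * ((1/2) * dd (H i) (2*(p:ℝ)+1) (n:ℝ)) - C|)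
          ≤ 1 * ((a i) ^ 2 * |(n:ℝ) ^ (3 - 2 * H i) * ((1/2) * dd (H i) (2*(p:ℝ)+1) (n:ℝ)) - C|) :=
            mul_le_mul_of_nonneg_right hY1 (by positivity)
        _ = (a i) ^ 2 * |(n:ℝ) ^ (3 - 2 * H i) * ((1/2) * dd (H i) (2*(p:ℝ)+1) (n:ℝ)) - C| :=
            one_mul _
  have hsum := tendsto_finset_sum (Finset.univ : Finset (Fin N)) (fun i _ => hterm i)
  rw [Finset.sum_const_zero] at hsum
  apply hsum.congr'
  filter_upwards [eventually_ge_atTop 1] with n hn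
  rw [unitCov_sum N a H p n hn, ← Finset.sum_sub_distrib, Finset.mul_sum]
end

section
/- Short-range dependence: for every H ∈ (0,1)^N, every a ∈ ℝ^N, and every natural number p, the series Σ_{n≥1} C(p,n) of unit-increment covariances of the mixed sub-fractional Brownian motion converges absolutely (the function n ↦ C(p,n) is summable). -/
open Real Finset

noncomputable def Dfun (h y : ℝ) : ℝ := (y + 2) ^ h - 2 * (y + 1) ^ h + y ^ h

lemma hasDerivAt_shift_rpow (c e : ℝ) {y : ℝ} (hy : 0 < y + c) :
    HasDerivAt (fun y : ℝ => (y + c) ^ e) (e * (y + c) ^ (e - 1)) y := by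
  have h1 : HasDerivAt (fun y : ℝ => y + c) 1 y := (hasDerivAt_id y).add_const c
  have h2 := Real.hasDerivAt_rpow_const (x := y + c) (p := e) (Or.inl (ne_of_gt hy))
  have h3 := h2.comp y h1
  rw [mul_one] at h3
  exact h3

lemma hasDerivAt_Dfun (h : ℝ) {y : ℝ} (hy : 0 < y) :
    HasDerivAt (Dfun h)
      (h * (y + 2) ^ (h - 1) - 2 * (h * (y + 1) ^ (h - 1)) + h * y ^ (h - 1)) y := by
  have h2 : HasDerivAt (fun y : ℝ => (y + 2) ^ h) (h * (y + 2) ^ (h - 1)) y :=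
    hasDerivAt_shift_rpow 2 h (by linarith)
  have h1 : HasDerivAt (fun y : ℝ => (y + 1) ^ h) (h * (y + 1) ^ (h - 1)) y :=
    hasDerivAt_shift_rpow 1 h (by linarith)
  have h0 : HasDerivAt (fun y : ℝ => y ^ h) (h * y ^ (h - 1)) y := by
    simpa using Real.hasDerivAt_rpow_const (x := y) (p := h) (Or.inl (ne_of_gt hy))
  exact (h2.sub (h1.const_mul 2)).add h0

noncomputable def Gfun (h y : ℝ) : ℝ := (y + 1) ^ (h - 1) - y ^ (h - 1)
noncomputable def gfun (h y : ℝ) : ℝ := (y + 1) ^ h - y ^ h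

lemma hasDerivAt_Gfun (h : ℝ) {y : ℝ} (hy : 0 < y) :
    HasDerivAt (Gfun h) ((h - 1) * ((y + 1) ^ (h - 2) - y ^ (h - 2))) y := by
  have h1 : HasDerivAt (fun y : ℝ => (y + 1) ^ (h - 1)) ((h - 1) * (y + 1) ^ (h - 1 - 1)) y :=
    hasDerivAt_shift_rpow 1 (h - 1) (by linarith)
  have h0 : HasDerivAt (fun y : ℝ => y ^ (h - 1)) ((h - 1) * y ^ (h - 1 - 1)) y := by
    simpa using Real.hasDerivAt_rpow_const (x := y) (p := h - 1) (Or.inl (ne_of_gt hy))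
  have := h1.sub h0
  have he : h - 1 - 1 = h - 2 := by ring
  rw [he] at this
  rw [mul_sub]
  exact this

lemma hasDerivAt_gfun (h : ℝ) {y : ℝ} (hy : 0 < y) :
    HasDerivAt (gfun h) (h * ((y + 1) ^ (h - 1) - y ^ (h - 1))) y := by
  have h1 : HasDerivAt (fun y : ℝ => (y + 1) ^ h) (h * (y + 1) ^ (h - 1)) y :=
    hasDerivAt_shift_rpow 1 h (by linarith)
  have h0 : HasDerivAt (fun y : ℝ => y ^ h) (h * y ^ (h - 1)) y := by
    simpa using Real.hasDerivAt_rpow_const (x := y) (p := h) (Or.inl (ne_of_gt hy))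
  rw [mul_sub]
  exact h1.sub h0

-- rpow base-antitone for nonpos exponent gives sign of G'
lemma Gdiff_nonpos (h : ℝ) (h2 : h ≤ 2) {y : ℝ} (hy : 0 < y) :
    (y + 1) ^ (h - 2) - y ^ (h - 2) ≤ 0 := by
  have := Real.rpow_le_rpow_of_nonpos hy (by linarith : y ≤ y + 1) (by linarith : h - 2 ≤ 0)
  linarith

lemma monoOn_Ici_one {f f' : ℝ → ℝ} (hd : ∀ y : ℝ, 0 < y → HasDerivAt f (f' y) y)
    (hs : ∀ y : ℝ, 1 ≤ y → 0 ≤ f' y) : MonotoneOn f (Set.Ici 1) := by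
  apply monotoneOn_of_deriv_nonneg (convex_Ici 1)
  · intro y hy
    exact (hd y (by linarith [Set.mem_Ici.mp hy])).continuousAt.continuousWithinAt
  · intro y hy
    rw [interior_Ici] at hy
    exact (hd y (by linarith [Set.mem_Ioi.mp hy])).differentiableAt.differentiableWithinAt
  · intro y hy
    rw [interior_Ici] at hy
    have hy1 : (1:ℝ) < y := hy
    rw [(hd y (by linarith)).deriv]
    exact hs y hy1.le

lemma antiOn_Ici_one {f f' : ℝ → ℝ} (hd : ∀ y : ℝ, 0 < y → HasDerivAt f (f' y) y)
    (hs : ∀ y : ℝ, 1 ≤ y → f' y ≤ 0) : AntitoneOn f (Set.Ici 1) := by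
  apply antitoneOn_of_deriv_nonpos (convex_Ici 1)
  · intro y hy
    exact (hd y (by linarith [Set.mem_Ici.mp hy])).continuousAt.continuousWithinAt
  · intro y hy
    rw [interior_Ici] at hy
    exact (hd y (by linarith [Set.mem_Ioi.mp hy])).differentiableAt.differentiableWithinAt
  · intro y hy
    rw [interior_Ici] at hy
    have hy1 : (1:ℝ) < y := hy
    rw [(hd y (by linarith)).deriv]
    exact hs y hy1.le

lemma Dfun_eq_gfun (h y : ℝ) : Dfun h y = gfun h (y + 1) - gfun h y := by
  rw [Dfun, gfun, gfun, show y + 1 + 1 = y + 2 by ring]; ring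

lemma Dderiv_eq_Gfun (h y : ℝ) :
    h * (y + 2) ^ (h - 1) - 2 * (h * (y + 1) ^ (h - 1)) + h * y ^ (h - 1)
      = h * (Gfun h (y + 1) - Gfun h y) := by
  rw [Gfun, Gfun, show y + 1 + 1 = y + 2 by ring]; ring

lemma Dmono_of_le_one {h : ℝ} (h0 : 0 < h) (h1 : h ≤ 1) :
    MonotoneOn (Dfun h) (Set.Ici 1) := by
  have Gmono : MonotoneOn (Gfun h) (Set.Ici 1) := by
    apply monoOn_Ici_one (fun y hy => hasDerivAt_Gfun h hy)
    intro y hy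
    exact mul_nonneg_iff.mpr (Or.inr ⟨by linarith, Gdiff_nonpos h (by linarith) (by linarith)⟩)
  apply monoOn_Ici_one (fun y hy => hasDerivAt_Dfun h hy)
  intro y hy
  rw [Dderiv_eq_Gfun]
  have := Gmono (Set.mem_Ici.mpr hy) (Set.mem_Ici.mpr (by linarith : (1:ℝ) ≤ y + 1))
    (by linarith : y ≤ y + 1)
  have := sub_nonneg.mpr this
  positivity

lemma Danti_of_one_le {h : ℝ} (h1 : 1 ≤ h) (h2 : h ≤ 2) :
    AntitoneOn (Dfun h) (Set.Ici 1) := by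
  have Ganti : AntitoneOn (Gfun h) (Set.Ici 1) := by
    apply antiOn_Ici_one (fun y hy => hasDerivAt_Gfun h hy)
    intro y hy
    exact mul_nonpos_of_nonneg_of_nonpos (by linarith) (Gdiff_nonpos h h2 (by linarith))
  apply antiOn_Ici_one (fun y hy => hasDerivAt_Dfun h hy)
  intro y hy
  rw [Dderiv_eq_Gfun]
  have hG := Ganti (Set.mem_Ici.mpr hy) (Set.mem_Ici.mpr (by linarith : (1:ℝ) ≤ y + 1))
    (by linarith : y ≤ y + 1)
  have : Gfun h (y + 1) - Gfun h y ≤ 0 := by linarith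
  exact mul_nonpos_of_nonneg_of_nonpos (by linarith) this

lemma Dnonpos_of_le_one {h : ℝ} (h0 : 0 < h) (h1 : h ≤ 1) {y : ℝ} (hy : 1 ≤ y) :
    Dfun h y ≤ 0 := by
  have gAnti : AntitoneOn (gfun h) (Set.Ici 1) := by
    apply antiOn_Ici_one (fun y hy => hasDerivAt_gfun h hy)
    intro y hy
    have hle : (y + 1) ^ (h - 1) - y ^ (h - 1) ≤ 0 := by
      have := Real.rpow_le_rpow_of_nonpos (by linarith : (0:ℝ) < y)
        (by linarith : y ≤ y + 1) (by linarith : h - 1 ≤ 0)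
      linarith
    exact mul_nonpos_of_nonneg_of_nonpos h0.le hle
  rw [Dfun_eq_gfun]
  have := gAnti (Set.mem_Ici.mpr hy) (Set.mem_Ici.mpr (by linarith : (1:ℝ) ≤ y + 1))
    (by linarith : y ≤ y + 1)
  linarith

lemma Dnonneg_of_one_le {h : ℝ} (h1 : 1 ≤ h) {y : ℝ} (hy : 1 ≤ y) :
    0 ≤ Dfun h y := by
  have gMono : MonotoneOn (gfun h) (Set.Ici 1) := by
    apply monoOn_Ici_one (fun y hy => hasDerivAt_gfun h hy)
    intro y hy
    have hle : y ^ (h - 1) ≤ (y + 1) ^ (h - 1) :=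
      Real.rpow_le_rpow (by linarith) (by linarith) (by linarith)
    have : 0 ≤ (y + 1) ^ (h - 1) - y ^ (h - 1) := by linarith
    positivity
  rw [Dfun_eq_gfun]
  have := gMono (Set.mem_Ici.mpr hy) (Set.mem_Ici.mpr (by linarith : (1:ℝ) ≤ y + 1))
    (by linarith : y ≤ y + 1)
  linarith

lemma summable_absE {h : ℝ} (h0 : 0 < h) (h2 : h ≤ 2) :
    Summable (fun j : ℕ => |Dfun h ((j : ℝ) + 1) - Dfun h ((j : ℝ) + 2)|) := by
  rcases le_or_gt h 1 with hle | hgt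
  · have Dmono := Dmono_of_le_one h0 hle
    have key : ∀ j : ℕ, |Dfun h ((j : ℝ) + 1) - Dfun h ((j : ℝ) + 2)|
        = Dfun h (((j + 1 : ℕ) : ℝ) + 1) - Dfun h ((j : ℝ) + 1) := by
      intro j
      push_cast
      rw [abs_sub_comm, abs_of_nonneg, show (j:ℝ) + 1 + 1 = (j:ℝ) + 2 by ring]
      have := Dmono (Set.mem_Ici.mpr (by have : (0:ℝ) ≤ (j:ℝ) := Nat.cast_nonneg j; linarith : (1:ℝ) ≤ (j:ℝ) + 1))
        (Set.mem_Ici.mpr (by have : (0:ℝ) ≤ (j:ℝ) := Nat.cast_nonneg j; linarith : (1:ℝ) ≤ (j:ℝ) + 2)) (by linarith)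
      linarith
    apply summable_of_sum_range_le (c := -Dfun h 1) (fun j => abs_nonneg _)
    intro M
    rw [Finset.sum_congr rfl (fun j _ => key j),
      Finset.sum_range_sub (f := fun j : ℕ => Dfun h ((j : ℝ) + 1))]
    have hM : Dfun h ((M : ℝ) + 1) ≤ 0 := Dnonpos_of_le_one h0 hle (by have : (0:ℝ) ≤ (M:ℝ) := Nat.cast_nonneg M; linarith)
    simp only [Nat.cast_zero, zero_add]
    linarith
  · have Danti := Danti_of_one_le hgt.le h2
    have key : ∀ j : ℕ, |Dfun h ((j : ℝ) + 1) - Dfun h ((j : ℝ) + 2)|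
        = Dfun h ((j : ℝ) + 1) - Dfun h (((j + 1 : ℕ) : ℝ) + 1) := by
      intro j
      push_cast
      rw [abs_of_nonneg, show (j:ℝ) + 1 + 1 = (j:ℝ) + 2 by ring]
      have := Danti (Set.mem_Ici.mpr (by have : (0:ℝ) ≤ (j:ℝ) := Nat.cast_nonneg j; linarith : (1:ℝ) ≤ (j:ℝ) + 1))
        (Set.mem_Ici.mpr (by have : (0:ℝ) ≤ (j:ℝ) := Nat.cast_nonneg j; linarith : (1:ℝ) ≤ (j:ℝ) + 2)) (by linarith)
      linarith
    apply summable_of_sum_range_le (c := Dfun h 1) (fun j => abs_nonneg _)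
    intro M
    have : ∀ j : ℕ, |Dfun h ((j : ℝ) + 1) - Dfun h ((j : ℝ) + 2)|
        = -(Dfun h (((j + 1 : ℕ) : ℝ) + 1) - Dfun h ((j : ℝ) + 1)) := by
      intro j; rw [key j]; ring
    rw [Finset.sum_congr rfl (fun j _ => this j), Finset.sum_neg_distrib,
      Finset.sum_range_sub (f := fun j : ℕ => Dfun h ((j : ℝ) + 1))]
    have hM : 0 ≤ Dfun h ((M : ℝ) + 1) := Dnonneg_of_one_le hgt.le (by have : (0:ℝ) ≤ (M:ℝ) := Nat.cast_nonneg M; linarith)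
    simp only [Nat.cast_zero, zero_add]
    linarith

lemma summable_absDiff {h : ℝ} (h0 : 0 < h) (h2 : h ≤ 2) (L : ℕ) :
    Summable (fun n : ℕ => |Dfun h ((n : ℝ) + 1) - Dfun h ((n : ℝ) + 1 + L)|) := by
  have hmaj : Summable (fun n : ℕ =>
      ∑ k ∈ Finset.range L, |Dfun h ((n : ℝ) + 1 + k) - Dfun h ((n : ℝ) + 2 + k)|) := by
    apply summable_sum
    intro k _
    have hk : Summable (fun n : ℕ => |Dfun h (((n + k : ℕ) : ℝ) + 1) - Dfun h (((n + k : ℕ) : ℝ) + 2)|) :=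
      (summable_nat_add_iff k).mpr (summable_absE h0 h2)
    apply hk.congr
    intro n
    push_cast
    ring_nf
  apply Summable.of_nonneg_of_le (fun n => abs_nonneg _) _ hmaj
  intro n
  have tele : Dfun h ((n : ℝ) + 1) - Dfun h ((n : ℝ) + 1 + L)
      = -∑ k ∈ Finset.range L,
          (Dfun h ((n : ℝ) + 1 + ((k + 1 : ℕ) : ℝ)) - Dfun h ((n : ℝ) + 1 + (k : ℝ))) := by
    rw [Finset.sum_range_sub (f := fun k : ℕ => Dfun h ((n : ℝ) + 1 + (k : ℝ)))]
    simp
  rw [tele, abs_neg]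
  refine (Finset.abs_sum_le_sum_abs _ _).trans ?_
  apply Finset.sum_le_sum
  intro k _
  rw [abs_sub_comm]
  apply le_of_eq
  push_cast
  ring_nf

lemma scUnit_eq (Hi x m : ℝ) (hx : 0 ≤ x) (hm : 1 ≤ m) :
    subCov Hi (x + 1) (x + m + 1) - subCov Hi (x + 1) (x + m)
      - subCov Hi x (x + m + 1) + subCov Hi x (x + m)
      = (1 / 2) * (Dfun (2 * Hi) (m - 1) - Dfun (2 * Hi) (2 * x + m)) := by
  rw [subCov, subCov, subCov, subCov, Dfun, Dfun]
  rw [show x + m + 1 - (x + 1) = m by ring, show x + m - (x + 1) = m - 1 by ring,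
    show x + m + 1 - x = m + 1 by ring, show x + m - x = m by ring,
    abs_of_nonneg (by linarith : (0:ℝ) ≤ m), abs_of_nonneg (by linarith : (0:ℝ) ≤ m - 1),
    abs_of_nonneg (by linarith : (0:ℝ) ≤ m + 1)]
  rw [show x + 1 + (x + m + 1) = 2 * x + m + 2 by ring,
    show x + 1 + (x + m) = 2 * x + m + 1 by ring,
    show x + (x + m + 1) = 2 * x + m + 1 by ring,
    show x + (x + m) = 2 * x + m by ring,
    show m - 1 + 2 = m + 1 by ring, show m - 1 + 1 = m by ring]
  ring

/-- Short-range dependence: the series `Σ_{n≥1} C(p,n)` of unit-increment covariances of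
the msfBm converges absolutely. -/
theorem msfbm_short_range_dependence (N : ℕ) (a H : Fin N → ℝ)
    (hH : ∀ i, H i ∈ Set.Ioo (0 : ℝ) 1) (p : ℕ) :
    Summable (fun n : ℕ => |unitCov N a H (p : ℝ) (n + 1)|) := by
  have key : Summable (fun n : ℕ => |unitCov N a H (p : ℝ) (n + 1 + 1)|) := by
    have hsum : Summable (fun n : ℕ => ∑ i, (a i) ^ 2 *
        ((1 / 2) * |Dfun (2 * H i) ((n : ℝ) + 1) - Dfun (2 * H i) ((n : ℝ) + 1 + ((2 * p + 1 : ℕ) : ℝ))|)) := by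
      apply summable_sum
      intro i _
      have h0 : (0:ℝ) < 2 * H i := by have := (hH i).1; linarith
      have h2 : 2 * H i ≤ 2 := by have := (hH i).2; linarith
      exact ((summable_absDiff h0 h2 (2 * p + 1)).mul_left (1 / 2)).mul_left ((a i) ^ 2)
    apply Summable.of_nonneg_of_le (fun n => abs_nonneg _) _ hsum
    intro n
    have expand : unitCov N a H (p : ℝ) (n + 1 + 1) = ∑ i, (a i) ^ 2 *
        ((1 / 2) * (Dfun (2 * H i) ((n : ℝ) + 1) - Dfun (2 * H i) ((n : ℝ) + 1 + ((2 * p + 1 : ℕ) : ℝ)))) := by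
      rw [unitCov, mixedCov, mixedCov, mixedCov, mixedCov, ← Finset.sum_sub_distrib,
        ← Finset.sum_sub_distrib, ← Finset.sum_add_distrib]
      apply Finset.sum_congr rfl
      intro i _
      rw [show (a i) ^ 2 * subCov (H i) ((p:ℝ) + 1) ((p:ℝ) + ((n + 1 + 1 : ℕ):ℝ) + 1)
            - (a i) ^ 2 * subCov (H i) ((p:ℝ) + 1) ((p:ℝ) + ((n + 1 + 1 : ℕ):ℝ))
            - (a i) ^ 2 * subCov (H i) (p:ℝ) ((p:ℝ) + ((n + 1 + 1 : ℕ):ℝ) + 1)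
            + (a i) ^ 2 * subCov (H i) (p:ℝ) ((p:ℝ) + ((n + 1 + 1 : ℕ):ℝ))
          = (a i) ^ 2 * (subCov (H i) ((p:ℝ) + 1) ((p:ℝ) + ((n + 1 + 1 : ℕ):ℝ) + 1)
            - subCov (H i) ((p:ℝ) + 1) ((p:ℝ) + ((n + 1 + 1 : ℕ):ℝ))
            - subCov (H i) (p:ℝ) ((p:ℝ) + ((n + 1 + 1 : ℕ):ℝ) + 1)
            + subCov (H i) (p:ℝ) ((p:ℝ) + ((n + 1 + 1 : ℕ):ℝ))) by ring]
      rw [scUnit_eq (H i) (p:ℝ) ((n + 1 + 1 : ℕ):ℝ) (Nat.cast_nonneg p)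
        (by push_cast; linarith [Nat.cast_nonneg (α := ℝ) n])]
      rw [show ((n + 1 + 1 : ℕ):ℝ) - 1 = (n:ℝ) + 1 by push_cast; ring,
        show 2 * (p:ℝ) + ((n + 1 + 1 : ℕ):ℝ) = (n:ℝ) + 1 + ((2 * p + 1 : ℕ):ℝ) by push_cast; ring]
    rw [expand]
    refine (Finset.abs_sum_le_sum_abs _ _).trans ?_
    apply Finset.sum_le_sum
    intro i _
    rw [abs_mul, abs_mul, abs_of_nonneg (sq_nonneg (a i)), abs_of_nonneg (by norm_num : (0:ℝ) ≤ 1/2)]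
  exact (summable_nat_add_iff 1).mp key
end

section
/- For every integer n ≥ 1, the unit-increment covariance of the mixed sub-fractional Brownian motion converges, as x → ∞, to the corresponding stationary increment covariance of the mixed fractional Brownian motion: lim_{x→∞} C(x,n) = Σ_{i=1}^N (a_i²/2) [ (n+1)^{2H_i} − 2n^{2H_i} + (n−1)^{2H_i} ]. -/
open Real Finset Filter

private lemma diff_rpow_tendsto {β : ℝ} (hβ0 : 0 < β) (hβ1 : β < 1) {c : ℝ} (hc : 0 ≤ c) :
    Tendsto (fun y : ℝ => (y + c) ^ β - y ^ β) atTop (nhds 0) := by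
  have hlim : Tendsto (fun y : ℝ => β * c * y ^ (β - 1)) atTop (nhds 0) := by
    have h := (tendsto_rpow_neg_atTop (show 0 < 1 - β by linarith)).const_mul (β * c)
    simp only [mul_zero] at h
    convert h using 2 with y
    norm_num
  apply squeeze_zero' ?_ ?_ hlim
  · filter_upwards [eventually_ge_atTop (0:ℝ)] with y hy
    exact sub_nonneg.2 (Real.rpow_le_rpow hy (by linarith) hβ0.le)
  · filter_upwards [eventually_gt_atTop (0:ℝ)] with y hy
    have h1 : (y + c) ^ β = y ^ β * (1 + c / y) ^ β := by
      rw [← Real.mul_rpow hy.le (by positivity)]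
      congr 1
      field_simp
    have h2 : (1 + c / y) ^ β ≤ 1 + β * (c / y) :=
      rpow_one_add_le_one_add_mul_self (le_trans (by norm_num) (by positivity : (0:ℝ) ≤ c / y)) hβ0.le hβ1.le
    have hyβ : (0:ℝ) ≤ y ^ β := (Real.rpow_pos_of_pos hy β).le
    have h3 : y ^ β * (c / y) = c * y ^ (β - 1) := by
      rw [Real.rpow_sub hy, Real.rpow_one]
      ring
    calc (y + c) ^ β - y ^ β = y ^ β * (1 + c / y) ^ β - y ^ β := by rw [h1]
      _ ≤ y ^ β * (1 + β * (c / y)) - y ^ β := by nlinarith [mul_le_mul_of_nonneg_left h2 hyβ]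
      _ = β * (y ^ β * (c / y)) := by ring
      _ = β * c * y ^ (β - 1) := by rw [h3]; ring

private lemma second_diff_tendsto {α : ℝ} (hα0 : 0 < α) (hα2 : α < 2) :
    Tendsto (fun y : ℝ => (y + 2) ^ α - 2 * (y + 1) ^ α + y ^ α) atTop (nhds 0) := by
  rcases lt_trichotomy α 1 with h1 | h1 | h1
  · have A := diff_rpow_tendsto hα0 h1 (zero_le_one (α := ℝ))
    have B := A.comp (tendsto_atTop_add_const_right atTop (1:ℝ) tendsto_id)
    have C := B.sub A
    rw [sub_zero] at C
    refine C.congr fun y => ?_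
    simp only [Function.comp, id]
    have e : y + 1 + 1 = y + 2 := by ring
    rw [e]; ring
  · subst h1
    have : (fun y : ℝ => (y + 2) ^ (1:ℝ) - 2 * (y + 1) ^ (1:ℝ) + y ^ (1:ℝ)) = fun _ => (0:ℝ) := by
      funext y; simp [Real.rpow_one]; ring
    rw [this]; exact tendsto_const_nhds
  · -- 1 < α < 2
    have hβ0 : 0 < α - 1 := by linarith
    have hβ1 : α - 1 < 1 := by linarith
    have hlim : Tendsto (fun y : ℝ => α * ((y + 2) ^ (α - 1) - y ^ (α - 1))) atTop (nhds 0) := by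
      have h := (diff_rpow_tendsto hβ0 hβ1 (show (0:ℝ) ≤ 2 by norm_num)).const_mul α
      simpa using h
    apply squeeze_zero' ?_ ?_ hlim
    · -- convexity: 0 ≤ second difference
      filter_upwards [eventually_ge_atTop (0:ℝ)] with y hy
      have hc := (convexOn_rpow h1.le).2 (Set.mem_Ici.2 hy)
        (Set.mem_Ici.2 (by linarith : (0:ℝ) ≤ y + 2))
        (by norm_num : (0:ℝ) ≤ (1:ℝ)/2) (by norm_num : (0:ℝ) ≤ (1:ℝ)/2) (by norm_num)
      simp only [smul_eq_mul] at hc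
      have e : (1:ℝ)/2 * y + 1/2 * (y + 2) = y + 1 := by ring
      rw [e] at hc
      linarith
    · filter_upwards [eventually_gt_atTop (0:ℝ)] with y hy
      have hy2 : (0:ℝ) < y + 2 := by linarith
      -- (y+1)^α ≥ (y+2)^α - α (y+2)^(α-1)
      have b1 : (y + 2) ^ α - α * (y + 2) ^ (α - 1) ≤ (y + 1) ^ α := by
        have hs : (-1:ℝ) ≤ -(1 / (y + 2)) := by
          rw [neg_le_neg_iff]
          rw [div_le_one hy2]; linarith
        have hb := one_add_mul_self_le_rpow_one_add hs h1.le
        have key : (y + 1) ^ α = (y + 2) ^ α * (1 + -(1 / (y + 2))) ^ α := by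
          rw [← Real.mul_rpow hy2.le (by nlinarith [hs] : (0:ℝ) ≤ 1 + -(1 / (y + 2)))]
          congr 1
          field_simp
          ring
        rw [key]
        have h4 : (y + 2) ^ α * (1 / (y + 2)) = (y + 2) ^ (α - 1) := by
          rw [Real.rpow_sub hy2, Real.rpow_one]; ring
        have hpos : (0:ℝ) ≤ (y + 2) ^ α := (Real.rpow_pos_of_pos hy2 α).le
        nlinarith [mul_le_mul_of_nonneg_left hb hpos]
      -- (y+1)^α ≥ y^α + α y^(α-1)
      have b2 : y ^ α + α * y ^ (α - 1) ≤ (y + 1) ^ α := by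
        have hs : (-1:ℝ) ≤ 1 / y := le_trans (by norm_num) (by positivity : (0:ℝ) ≤ 1 / y)
        have hb := one_add_mul_self_le_rpow_one_add hs h1.le
        have key : (y + 1) ^ α = y ^ α * (1 + 1 / y) ^ α := by
          rw [← Real.mul_rpow hy.le (by positivity)]
          congr 1
          field_simp
        rw [key]
        have h4 : y ^ α * (1 / y) = y ^ (α - 1) := by
          rw [Real.rpow_sub hy, Real.rpow_one]; ring
        have hpos : (0:ℝ) ≤ y ^ α := (Real.rpow_pos_of_pos hy α).le
        nlinarith [mul_le_mul_of_nonneg_left hb hpos]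
      nlinarith [b1, b2]

private lemma unitCov_eq (N : ℕ) (a H : Fin N → ℝ) (n : ℕ) (hn : 1 ≤ n) (x : ℝ) :
    unitCov N a H x n =
      (∑ i, (a i) ^ 2 / 2 *
        (((n : ℝ) + 1) ^ (2 * H i) - 2 * (n : ℝ) ^ (2 * H i)
          + ((n : ℝ) - 1) ^ (2 * H i)))
      - ∑ i, (a i) ^ 2 / 2 *
        ((2 * x + n + 2) ^ (2 * H i) - 2 * (2 * x + n + 1) ^ (2 * H i)
          + (2 * x + n) ^ (2 * H i)) := by
  have hn1 : (1:ℝ) ≤ (n:ℝ) := by exact_mod_cast hn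
  simp only [unitCov, mixedCov, ← Finset.sum_sub_distrib, ← Finset.sum_add_distrib]
  apply Finset.sum_congr rfl
  intro i _
  simp only [subCov]
  have a1 : x + (n:ℝ) + 1 - (x + 1) = (n:ℝ) := by ring
  have a2 : x + (n:ℝ) - (x + 1) = (n:ℝ) - 1 := by ring
  have a3 : x + (n:ℝ) + 1 - x = (n:ℝ) + 1 := by ring
  have a4 : x + (n:ℝ) - x = (n:ℝ) := by ring
  have b1 : x + 1 + (x + (n:ℝ) + 1) = 2 * x + (n:ℝ) + 2 := by ring
  have b2 : x + 1 + (x + (n:ℝ)) = 2 * x + (n:ℝ) + 1 := by ring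
  have b3 : x + (x + (n:ℝ) + 1) = 2 * x + (n:ℝ) + 1 := by ring
  have b4 : x + (x + (n:ℝ)) = 2 * x + (n:ℝ) := by ring
  rw [a1, a2, a3, a4, b1, b2, b3, b4,
    abs_of_nonneg (by linarith : (0:ℝ) ≤ (n:ℝ)),
    abs_of_nonneg (by linarith : (0:ℝ) ≤ (n:ℝ) - 1),
    abs_of_nonneg (by linarith : (0:ℝ) ≤ (n:ℝ) + 1)]
  ring

/-- As `x → ∞` the unit-increment covariance of the msfBm converges to the stationary
increment covariance `R(0,n) = Σ_i (a_i²/2)[(n+1)^{2H_i} − 2n^{2H_i} + (n−1)^{2H_i}]`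
of the mixed fractional Brownian motion. -/
theorem msfbm_unit_increment_covariance_limit (N : ℕ) (a H : Fin N → ℝ)
    (hH : ∀ i, H i ∈ Set.Ioo (0 : ℝ) 1) (n : ℕ) (hn : 1 ≤ n) :
    Tendsto (fun x : ℝ => unitCov N a H x n) atTop
      (nhds (∑ i, (a i) ^ 2 / 2 *
        (((n : ℝ) + 1) ^ (2 * H i) - 2 * (n : ℝ) ^ (2 * H i)
          + ((n : ℝ) - 1) ^ (2 * H i)))) := by

  have hφ : Tendsto (fun x : ℝ => 2 * x + (n:ℝ)) atTop atTop :=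
    tendsto_atTop_add_const_right atTop (n:ℝ) (tendsto_id.const_mul_atTop two_pos)
  have hS : Tendsto (fun x : ℝ => ∑ i, (a i) ^ 2 / 2 *
      ((2 * x + n + 2) ^ (2 * H i) - 2 * (2 * x + n + 1) ^ (2 * H i)
        + (2 * x + n) ^ (2 * H i))) atTop (nhds 0) := by
    have : Tendsto (fun x : ℝ => ∑ i, (a i) ^ 2 / 2 *
        ((2 * x + n + 2) ^ (2 * H i) - 2 * (2 * x + n + 1) ^ (2 * H i)
          + (2 * x + n) ^ (2 * H i))) atTop (nhds (∑ i : Fin N, (0:ℝ))) := by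
      apply tendsto_finset_sum
      intro i _
      have hi := (second_diff_tendsto (by linarith [(hH i).1] : 0 < 2 * H i)
        (by linarith [(hH i).2] : 2 * H i < 2)).comp hφ
      have := hi.const_mul ((a i) ^ 2 / 2)
      simpa [Function.comp] using this
    simpa using this
  have hL : Tendsto (fun _ : ℝ => (∑ i, (a i) ^ 2 / 2 *
      (((n : ℝ) + 1) ^ (2 * H i) - 2 * (n : ℝ) ^ (2 * H i)
        + ((n : ℝ) - 1) ^ (2 * H i)))) atTop
      (nhds (∑ i, (a i) ^ 2 / 2 *
        (((n : ℝ) + 1) ^ (2 * H i) - 2 * (n : ℝ) ^ (2 * H i)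
          + ((n : ℝ) - 1) ^ (2 * H i)))) := tendsto_const_nhds
  have := hL.sub hS
  rw [sub_zero] at this
  exact this.congr fun x => (unitCov_eq N a H n hn x).symm
end

section
/- Non-differentiability (variance blow-up): let a ∈ ℝ^N \ {0} and H ∈ (0,1)^N. For every t₀ ≥ 0, the scaled increment variance σ_n²(t₀) = f(t₀, t₀ + 1/n) satisfies lim_{n→∞} n² · σ_n²(t₀) = +∞. (This is the key estimate showing that with probability one the sample paths of the mixed sub-fractional Brownian motion are not differentiable at t₀.) -/
open Real Finset Filter

/-- The increment variance `f(s,t) = C(t,t) + C(s,s) − 2 C(s,t)`. -/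
noncomputable def incVar (N : ℕ) (a H : Fin N → ℝ) (s t : ℝ) : ℝ :=
  mixedCov N a H t t + mixedCov N a H s s - 2 * mixedCov N a H s t

lemma powmean {β x y : ℝ} (hβ0 : 0 < β) (hβ1 : β ≤ 1) (hx : 0 ≤ x) (hy : 0 ≤ y) :
    (2:ℝ)^(β-1) * (x^β + y^β) ≤ (x+y)^β := by
  have hc := (Real.concaveOn_rpow hβ0.le hβ1).2 (Set.mem_Ici.2 hx) (Set.mem_Ici.2 hy)
    (by norm_num : (0:ℝ) ≤ 1/2) (by norm_num : (0:ℝ) ≤ 1/2) (by norm_num)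
  simp only [smul_eq_mul] at hc
  have h2 : ((x+y)/2 : ℝ) ^ β = (x+y)^β / 2^β := by
    rw [Real.div_rpow (by linarith) (by norm_num)]
  have h3 : (1/2:ℝ) * x + 1/2 * y = (x+y)/2 := by ring
  rw [h3, h2] at hc
  have h2pos : (0:ℝ) < (2:ℝ)^β := Real.rpow_pos_of_pos (by norm_num) _
  rw [Real.rpow_sub (by norm_num : (0:ℝ) < 2), Real.rpow_one]
  rw [le_div_iff₀ h2pos] at hc
  nlinarith [hc]

lemma convexCase {α h : ℝ} (hα1 : 1 < α) (hα2 : α < 2) (hh : 0 ≤ h) {s : ℝ} (hs : 0 ≤ s) :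
    h^α - (2:ℝ)^(α-1) * h^α ≤ (2*s+h)^α - (2:ℝ)^(α-1) * s^α - (2:ℝ)^(α-1) * (s+h)^α := by
  set c := (2:ℝ)^(α-1) with hc
  set φ : ℝ → ℝ := fun x => (2*x+h)^α - c*x^α - c*(x+h)^α with hφ
  have hd : ∀ x : ℝ, HasDerivAt φ
      (2*(α*(2*x+h)^(α-1)) - c*(α*x^(α-1)) - c*(α*(x+h)^(α-1))) x := by
    intro x
    have h1 : HasDerivAt (fun x : ℝ => 2*x+h) 2 x := by
      simpa using ((hasDerivAt_id x).const_mul 2).add_const h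
    have h2 : HasDerivAt (fun x : ℝ => (2*x+h)^α) (α*(2*x+h)^(α-1) * 2) x :=
      (Real.hasDerivAt_rpow_const (Or.inr hα1.le)).comp x h1
    have h3 : HasDerivAt (fun x : ℝ => c * x^α) (c * (α*x^(α-1))) x :=
      (Real.hasDerivAt_rpow_const (Or.inr hα1.le)).const_mul c
    have h4 : HasDerivAt (fun x : ℝ => c * (x+h)^α) (c * (α*(x+h)^(α-1) * 1)) x :=
      ((Real.hasDerivAt_rpow_const (Or.inr hα1.le)).comp x
        ((hasDerivAt_id x).add_const h)).const_mul c
    have := (h2.sub h3).sub h4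
    refine this.congr_deriv ?_
    ring
  have hmono : MonotoneOn φ (Set.Ici 0) := by
    apply monotoneOn_of_deriv_nonneg (convex_Ici 0)
    · exact fun x _ => (hd x).differentiableAt.continuousAt.continuousWithinAt
    · intro x _
      exact (hd x).differentiableAt.differentiableWithinAt
    · intro x hx
      rw [interior_Ici] at hx
      rw [(hd x).deriv]
      have hx0 : (0:ℝ) ≤ x := le_of_lt hx
      have hp := powmean (β := α-1) (by linarith) (by linarith) hx0
        (by linarith : (0:ℝ) ≤ x+h)
      rw [show x + (x+h) = 2*x+h by ring] at hp
      have hc2 : c = 2 * (2:ℝ)^(α-1-1) := by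
        rw [hc, show α-1-1 = (α-1) + (-1) by ring,
          Real.rpow_add (by norm_num : (0:ℝ) < 2), Real.rpow_neg_one]; ring
      rw [hc2]
      have hmul := mul_le_mul_of_nonneg_left hp (by linarith : (0:ℝ) ≤ 2*α)
      nlinarith [hmul]
  have h0 : φ 0 ≤ φ s := hmono (Set.mem_Ici.2 le_rfl) (Set.mem_Ici.2 hs) hs
  have hz : φ 0 = h^α - c*h^α := by
    simp only [hφ]
    rw [Real.zero_rpow (by positivity : α ≠ 0)]
    norm_num
  rw [hz] at h0
  simpa using h0

lemma term_lb {α s h : ℝ} (hα0 : 0 < α) (hα2 : α < 2) (hs : 0 ≤ s) (hh : 0 ≤ h) :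
    min 1 (2 - (2:ℝ)^(α-1)) * h^α
      ≤ (2*s+h)^α + h^α - (2:ℝ)^(α-1)*(s^α + (s+h)^α) := by
  have hha : (0:ℝ) ≤ h^α := Real.rpow_nonneg hh α
  rcases le_or_gt α 1 with hα1 | hα1
  · have hp := powmean hα0 hα1 hs (by linarith : (0:ℝ) ≤ s+h)
    rw [show s + (s+h) = 2*s+h by ring] at hp
    have hmin : min 1 (2 - (2:ℝ)^(α-1)) ≤ 1 := min_le_left _ _
    nlinarith [mul_le_mul_of_nonneg_right hmin hha]
  · have hp := convexCase hα1 hα2 hh hs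
    have hmin : min 1 (2 - (2:ℝ)^(α-1)) ≤ 2 - (2:ℝ)^(α-1) := min_le_right _ _
    nlinarith [mul_le_mul_of_nonneg_right hmin hha]

lemma gamma_pos {α : ℝ} (hα2 : α < 2) : 0 < min 1 (2 - (2:ℝ)^(α-1)) := by
  have : (2:ℝ)^(α-1) < 2 := by
    calc (2:ℝ)^(α-1) < (2:ℝ)^(1:ℝ) :=
          Real.rpow_lt_rpow_of_exponent_lt (by norm_num) (by linarith)
      _ = 2 := Real.rpow_one 2
  exact lt_min one_pos (by linarith)

lemma subVar_eq {Hp s h : ℝ} (hHp : 0 < Hp) (hs : 0 ≤ s) (hh : 0 ≤ h) :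
    subCov Hp (s+h) (s+h) + subCov Hp s s - 2 * subCov Hp s (s+h)
      = (2*s+h)^(2*Hp) + h^(2*Hp) - (2:ℝ)^(2*Hp-1)*(s^(2*Hp) + (s+h)^(2*Hp)) := by
  have hne : 2*Hp ≠ 0 := by positivity
  have e1 : |s + h - s| = h := by rw [show s+h-s = h by ring, abs_of_nonneg hh]
  unfold subCov
  rw [e1]
  simp only [sub_self, abs_zero, Real.zero_rpow hne]
  rw [show ((s+h)+(s+h) : ℝ) = 2*(s+h) by ring, show (s+s:ℝ) = 2*s by ring,
    Real.mul_rpow (by norm_num) (by linarith), Real.mul_rpow (by norm_num) hs,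
    Real.rpow_sub (by norm_num : (0:ℝ)<2), Real.rpow_one,
    show (s + (s+h) : ℝ) = 2*s+h by ring]
  ring

lemma incVar_sum (N : ℕ) (a H : Fin N → ℝ) (s t : ℝ) :
    incVar N a H s t
      = ∑ i, a i^2 * (subCov (H i) t t + subCov (H i) s s - 2 * subCov (H i) s t) := by
  unfold incVar mixedCov
  rw [Finset.mul_sum, ← Finset.sum_add_distrib, ← Finset.sum_sub_distrib]
  exact Finset.sum_congr rfl fun i _ => by ring

/-- Non-differentiability (variance blow-up): for every `t₀ ≥ 0`, with
`σ_n²(t₀) = E(S^H(t₀+1/n) − S^H(t₀))²`, one has `n² σ_n²(t₀) → +∞`. -/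
theorem msfbm_variance_blow_up (N : ℕ) (a H : Fin N → ℝ)
    (hH : ∀ i, H i ∈ Set.Ioo (0 : ℝ) 1) (ha : a ≠ 0)
    (t₀ : ℝ) (ht₀ : 0 ≤ t₀) :
    Tendsto (fun n : ℕ => (n : ℝ) ^ 2 * incVar N a H t₀ (t₀ + 1 / n))
      atTop atTop := by
  obtain ⟨j, hj⟩ := Function.ne_iff.mp ha
  have hj : a j ≠ 0 := by simpa using hj
  set γ := min 1 (2 - (2:ℝ)^(2 * H j - 1)) with hγ
  have hγpos : 0 < γ := gamma_pos (by linarith [(hH j).2])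
  set c := a j ^ 2 * γ with hcdef
  have hcpos : 0 < c := by positivity
  have hp : 0 < 2 - 2 * H j := by linarith [(hH j).2]
  have hlim : Tendsto (fun n : ℕ => c * (n:ℝ) ^ (2 - 2 * H j)) atTop atTop := by
    apply Tendsto.const_mul_atTop hcpos
    exact (tendsto_rpow_atTop hp).comp tendsto_natCast_atTop_atTop
  apply tendsto_atTop_mono' _ _ hlim
  filter_upwards [eventually_ge_atTop 1] with n hn
  have hn0 : (0:ℝ) < (n:ℝ) := by exact_mod_cast Nat.lt_of_lt_of_le Nat.zero_lt_one hn
  set h := (1:ℝ)/n with hhdef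
  have hhpos : 0 < h := by positivity
  -- lower bound the incVar
  have hsum : incVar N a H t₀ (t₀ + h)
      = ∑ i, a i^2 * ((2*t₀+h)^(2*H i) + h^(2*H i)
          - (2:ℝ)^(2*H i-1)*(t₀^(2*H i) + (t₀+h)^(2*H i))) := by
    rw [incVar_sum]
    exact Finset.sum_congr rfl fun i _ => by rw [subVar_eq (hH i).1 ht₀ hhpos.le]
  have hterm : ∀ i : Fin N, (0:ℝ) ≤ a i^2 * ((2*t₀+h)^(2*H i) + h^(2*H i)
      - (2:ℝ)^(2*H i-1)*(t₀^(2*H i) + (t₀+h)^(2*H i))) := by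
    intro i
    apply mul_nonneg (sq_nonneg _)
    have := term_lb (by linarith [(hH i).1] : (0:ℝ) < 2*H i)
      (by linarith [(hH i).2]) ht₀ hhpos.le
    have hγi : 0 < min 1 (2 - (2:ℝ)^(2*H i-1)) := gamma_pos (by linarith [(hH i).2])
    nlinarith [Real.rpow_nonneg hhpos.le (2*H i)]
  have hjlb : a j^2 * (γ * h^(2*H j)) ≤ incVar N a H t₀ (t₀ + h) := by
    rw [hsum]
    calc a j^2 * (γ * h^(2*H j))
        ≤ a j^2 * ((2*t₀+h)^(2*H j) + h^(2*H j)
            - (2:ℝ)^(2*H j-1)*(t₀^(2*H j) + (t₀+h)^(2*H j))) := by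
          apply mul_le_mul_of_nonneg_left _ (sq_nonneg _)
          exact term_lb (by linarith [(hH j).1]) (by linarith [(hH j).2]) ht₀ hhpos.le
      _ ≤ _ := Finset.single_le_sum (fun i _ => hterm i) (Finset.mem_univ j)
  -- now the arithmetic: n^2 * (c * h^(2Hj)) = c * n^(2-2Hj)
  have hkey : c * (n:ℝ) ^ (2 - 2 * H j) = (n:ℝ)^2 * (a j^2 * (γ * h^(2*H j))) := by
    have h2 : ((n:ℝ))^(2:ℕ) = (n:ℝ)^((2:ℝ)) := by
      rw [← Real.rpow_natCast]; norm_num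
    rw [show (2 - 2*H j : ℝ) = 2 + -(2*H j) by ring, Real.rpow_add hn0,
      hhdef, show (1:ℝ)/n = ((n:ℝ))⁻¹ by ring, Real.inv_rpow hn0.le,
      ← Real.rpow_neg hn0.le, h2, hcdef]
    ring
  rw [hkey]
  exact mul_le_mul_of_nonneg_left hjlb (by positivity)
end

section
/- Gaussian small-ball-type integral bound: let σ > 0, d > 0, and u > 1. If μ is the centered Gaussian measure on ℝ with variance σ², then ∫_ℝ (d + |x|)^{−u} dμ(x) ≤ √(2/π) · (u/(u−1)) · d^{1−u} · σ^{−1}. (With d = |t−s| and σ² = E(S_t − S_s)², this gives E((|s−t| + |S_t^H(a) − S_s^H(a)|)^{−u}) ≤ c |t−s|^{1−u} σ(s,t)^{−1} with c = √(2/π)·u/(u−1).) -/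
open Real MeasureTheory ProbabilityTheory

open Set in
lemma integrable_comp_abs_aux {f : ℝ → ℝ} (hf : IntegrableOn (fun x => f |x|) (Set.Ioi 0)) :
    Integrable fun x => f |x| := by
  have int_Iic : IntegrableOn (fun x ↦ f |x|) (Iic 0) := by
    rw [← Measure.map_neg_eq_self (volume : Measure ℝ)]
    let m : MeasurableEmbedding fun x : ℝ => -x := (Homeomorph.neg ℝ).measurableEmbedding
    rw [m.integrableOn_map_iff]
    simp_rw [Function.comp_def, abs_neg, neg_preimage, neg_Iic, neg_zero]
    exact Iff.mpr integrableOn_Ici_iff_integrableOn_Ioi hf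
  have := int_Iic.union hf
  rwa [Iic_union_Ioi, integrableOn_univ] at this

/-- Gaussian small-ball-type integral bound: if `μ` is the centered Gaussian measure on `ℝ`
with variance `σ² > 0`, `d > 0` and `u > 1`, then
`∫ (d + |x|)^{−u} dμ(x) ≤ √(2/π)·(u/(u−1))·d^{1−u}·σ⁻¹`. -/
theorem gaussian_small_ball_integral_bound (σ d u : ℝ)
    (hσ : 0 < σ) (hd : 0 < d) (hu : 1 < u) :
    ∫ x, (d + |x|) ^ (-u) ∂(gaussianReal 0 ⟨σ ^ 2, sq_nonneg σ⟩)
      ≤ Real.sqrt (2 / π) * (u / (u - 1)) * d ^ (1 - u) * σ⁻¹ := by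
  set v : NNReal := ⟨σ ^ 2, sq_nonneg σ⟩ with hv_def
  have hv : v ≠ 0 := by
    intro h
    have : (v : ℝ) = 0 := by rw [h]; simp
    simp only [hv_def, NNReal.coe_mk] at this
    have this : σ ^ 2 = 0 := this
    nlinarith
  have hvr : (v : ℝ) = σ ^ 2 := rfl
  set C : ℝ := (Real.sqrt (2 * π * σ ^ 2))⁻¹ with hC_def
  have hC_nonneg : 0 ≤ C := inv_nonneg.2 (Real.sqrt_nonneg _)
  -- Step 1: express as Lebesgue integral against the density
  have h1 : ∫ x, (d + |x|) ^ (-u) ∂(gaussianReal 0 v)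
      = ∫ x, gaussianPDFReal 0 v x * (d + |x|) ^ (-u) := by
    rw [gaussianReal_of_var_ne_zero 0 hv]
    have : (gaussianPDF 0 v) = fun x => ((gaussianPDFReal 0 v x).toNNReal : ENNReal) := rfl
    rw [this, integral_withDensity_eq_integral_smul
      ((measurable_gaussianPDFReal 0 v).real_toNNReal)]
    congr 1
    ext x
    rw [NNReal.smul_def, smul_eq_mul, Real.coe_toNNReal _ (gaussianPDFReal_nonneg 0 v x)]
  -- the majorant
  set ψ : ℝ → ℝ := fun x => C * (max d x) ^ (-u) with hψ_def
  -- integrability of the majorant on Ioi 0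
  have hψ_Ioc : IntegrableOn (fun x => (max d x) ^ (-u)) (Set.Ioc 0 d) := by
    have hc : IntegrableOn (fun _ : ℝ => d ^ (-u)) (Set.Ioc 0 d) :=
      integrableOn_const measure_Ioc_lt_top.ne
    exact hc.congr_fun (fun x hx => by rw [max_eq_left hx.2]) measurableSet_Ioc
  have hψ_Ioi : IntegrableOn (fun x => (max d x) ^ (-u)) (Set.Ioi d) := by
    apply (integrableOn_Ioi_rpow_of_lt (by linarith : -u < -1) hd).congr_fun
      (fun x hx => ?_) measurableSet_Ioi
    rw [max_eq_right (le_of_lt hx)]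
  have hunion : Set.Ioc 0 d ∪ Set.Ioi d = Set.Ioi 0 := Set.Ioc_union_Ioi_eq_Ioi hd.le
  have hψ_int0 : IntegrableOn (fun x => (max d x) ^ (-u)) (Set.Ioi 0) := by
    rw [← hunion]; exact hψ_Ioc.union hψ_Ioi
  have hψ_int0' : IntegrableOn (fun x => (max d |x|) ^ (-u)) (Set.Ioi 0) :=
    hψ_int0.congr_fun (fun x hx => by rw [abs_of_pos hx]) measurableSet_Ioi
  have hψ_int : Integrable (fun x => ψ |x|) := by
    simp_rw [hψ_def]
    exact (integrable_comp_abs_aux (f := fun x => (max d x) ^ (-u)) hψ_int0').const_mul C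
  -- Step 2: pointwise bound
  have h2 : ∀ x : ℝ, gaussianPDFReal 0 v x * (d + |x|) ^ (-u) ≤ ψ |x| := by
    intro x
    have hpdf : gaussianPDFReal 0 v x ≤ C := by
      rw [gaussianPDFReal, hvr]
      calc (Real.sqrt (2 * π * σ ^ 2))⁻¹ * rexp (-(x - 0) ^ 2 / (2 * σ ^ 2))
          ≤ (Real.sqrt (2 * π * σ ^ 2))⁻¹ * 1 := by
            apply mul_le_mul_of_nonneg_left _ (inv_nonneg.2 (Real.sqrt_nonneg _))
            rw [Real.exp_le_one_iff]
            apply div_nonpos_of_nonpos_of_nonneg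
            · simp [sq_nonneg]
            · positivity
        _ = C := by rw [mul_one]
    have hbase : (d + |x|) ^ (-u) ≤ (max d |x|) ^ (-u) := by
      apply Real.rpow_le_rpow_of_nonpos (lt_max_of_lt_left hd) _ (by linarith)
      exact max_le (by linarith [abs_nonneg x]) (by linarith)
    calc gaussianPDFReal 0 v x * (d + |x|) ^ (-u)
        ≤ C * (max d |x|) ^ (-u) := by
          apply mul_le_mul hpdf hbase (Real.rpow_nonneg (by positivity) _) hC_nonneg
      _ = ψ |x| := rfl
  -- Step 3: compute the integral of the majorant
  have h3 : ∫ x, ψ |x| = C * (2 * (d ^ (1 - u) * (u / (u - 1)))) := by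
    rw [integral_comp_abs (f := ψ)]
    rw [hψ_def]
    simp only
    rw [MeasureTheory.integral_const_mul]
    have hsplit : ∫ x in Set.Ioi (0:ℝ), (max d x) ^ (-u)
        = (∫ x in Set.Ioc (0:ℝ) d, (max d x) ^ (-u)) + ∫ x in Set.Ioi d, (max d x) ^ (-u) := by
      rw [← setIntegral_union (Set.Ioc_disjoint_Ioi le_rfl) measurableSet_Ioi hψ_Ioc hψ_Ioi,
        hunion]
    have hIoc : ∫ x in Set.Ioc (0:ℝ) d, (max d x) ^ (-u) = d ^ (1 - u) := by
      rw [setIntegral_congr_fun measurableSet_Ioc (g := fun _ => d ^ (-u))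
        (fun x hx => by rw [max_eq_left hx.2])]
      rw [setIntegral_const, Real.volume_real_Ioc_of_le hd.le, smul_eq_mul,
        show d - 0 = d by ring,
        show (1:ℝ) - u = 1 + -u by ring, Real.rpow_add hd, Real.rpow_one]
    have hIoi : ∫ x in Set.Ioi d, (max d x) ^ (-u) = d ^ (1 - u) / (u - 1) := by
      rw [setIntegral_congr_fun measurableSet_Ioi (g := fun x => x ^ (-u))
        (fun x hx => by rw [max_eq_right (le_of_lt hx)])]
      rw [integral_Ioi_rpow_of_lt (by linarith) hd,
        show -u + 1 = 1 - u by ring,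
        div_eq_div_iff (show (1:ℝ) - u ≠ 0 by intro h; nlinarith)
          (show u - 1 ≠ 0 by intro h; nlinarith)]
      ring
    rw [hsplit, hIoc, hIoi]
    have h1u : u - 1 ≠ 0 := by intro h; nlinarith
    field_simp
    ring
  -- combine
  rw [h1]
  calc ∫ x, gaussianPDFReal 0 v x * (d + |x|) ^ (-u)
      ≤ ∫ x, ψ |x| := by
        apply integral_mono_of_nonneg _ hψ_int (Filter.Eventually.of_forall h2)
        exact Filter.Eventually.of_forall fun x => mul_nonneg (gaussianPDFReal_nonneg 0 v x)
          (Real.rpow_nonneg (by positivity) _)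
    _ = C * (2 * (d ^ (1 - u) * (u / (u - 1)))) := h3
    _ = Real.sqrt (2 / π) * (u / (u - 1)) * d ^ (1 - u) * σ⁻¹ := by
        rw [hC_def]
        have hπ : 0 < π := Real.pi_pos
        have h2π : Real.sqrt (2 * π * σ ^ 2) = Real.sqrt 2 * Real.sqrt π * σ := by
          rw [Real.sqrt_mul (by positivity), Real.sqrt_mul (by norm_num),
            Real.sqrt_sq hσ.le]
        have hsq2 : Real.sqrt (2 / π) = Real.sqrt 2 / Real.sqrt π :=
          Real.sqrt_div (by norm_num) π
        have hs2 : Real.sqrt 2 * Real.sqrt 2 = 2 := Real.mul_self_sqrt (by norm_num)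
        have hsπ : (0:ℝ) < Real.sqrt π := Real.sqrt_pos.2 Real.pi_pos
        have hs2pos : (0:ℝ) < Real.sqrt 2 := Real.sqrt_pos.2 (by norm_num)
        rw [h2π, hsq2]
        field_simp [hsπ.ne', hs2pos.ne', hσ.ne', sub_ne_zero.mpr hu.ne']
        ring_nf
        linear_combination
          (-1) * hs2
end

section
/- Local nondeterminism of the mixed sub-fractional Brownian motion: let a ∈ ℝ^N \ {0}, let H_{i₀} = min{H_i : a_i ≠ 0}, and let T > 0. There exists a constant c > 0 such that for all 0 ≤ s ≤ t ≤ T, inf_{b ∈ ℝ} ( C(t,t) − 2b·C(s,t) + b²·C(s,s) ) ≥ c (t−s)^{2H_{i₀}}. (The left-hand side equals the conditional variance Var(S^H(t) | S^H(s)) of the centered Gaussian process with covariance C.) -/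
open Real Finset

section Aux

open MeasureTheory Set

noncomputable def KK (α u x : ℝ) : ℝ := (max (u - x) 0) ^ α - (max (-x) 0) ^ α

lemma meas_rpow_of_nonneg {g : ℝ → ℝ} (hg : Measurable g) (h0 : ∀ x, 0 ≤ g x) (α : ℝ) :
    Measurable fun x => g x ^ α := by
  have he : (fun x => g x ^ α)
      = fun x => if g x = 0 then (0:ℝ) ^ α else Real.exp (Real.log (g x) * α) := by
    funext x
    split_ifs with h
    · rw [h]
    · rw [Real.rpow_def_of_pos (lt_of_le_of_ne (h0 x) (Ne.symm h))]
  rw [he]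
  exact Measurable.ite (measurableSet_eq_fun hg measurable_const) measurable_const
    ((hg.log.mul measurable_const).exp)

lemma KK_meas (α u : ℝ) : Measurable (KK α u) := by
  apply Measurable.sub
  · exact meas_rpow_of_nonneg ((measurable_const.sub measurable_id).max measurable_const)
      (fun x => le_max_right _ _) α
  · exact meas_rpow_of_nonneg (measurable_id.neg.max measurable_const)
      (fun x => le_max_right _ _) α

lemma KK_sub (α u v x : ℝ) : KK α u x - KK α v x = KK α (u - v) (x - v) := by
  unfold KK
  have h1 : u - v - (x - v) = u - x := by ring
  have h2 : -(x - v) = v - x := by ring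
  rw [h1, h2]; ring

lemma KK_neg (α u x : ℝ) : KK α (-u) (x - u) = - KK α u x := by
  unfold KK
  have h1 : -u - (x - u) = -x := by ring
  have h2 : -(x - u) = u - x := by ring
  rw [h1, h2]; ring

lemma KK_scale (α : ℝ) {c : ℝ} (hc : 0 < c) (u x : ℝ) :
    KK α (c * u) (c * x) = c ^ α * KK α u x := by
  unfold KK
  have h1 : max (c * u - c * x) 0 = c * max (u - x) 0 := by
    have h : c * u - c * x = c * (u - x) := by ring
    rw [h, mul_max_of_nonneg _ _ hc.le, mul_zero]
  have h2 : max (-(c * x)) 0 = c * max (-x) 0 := by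
    have h : -(c * x) = c * (-x) := by ring
    rw [h, mul_max_of_nonneg _ _ hc.le, mul_zero]
  rw [h1, h2, Real.mul_rpow hc.le (le_max_right _ _), Real.mul_rpow hc.le (le_max_right _ _)]
  ring

section
variable {α : ℝ}

lemma two_alpha_ne (hα0 : α ≠ 0) : α + α ≠ 0 := by intro h; exact hα0 (by linarith)

lemma integrable_J_sq (hα0 : α ≠ 0) (hα1 : -(1/2) < α) (hα2 : α < 1/2) :
    Integrable (fun y => (KK α 1 (-y))^2) := by
  set f : ℝ → ℝ := fun y => (KK α 1 (-y))^2 with hf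
  have hmeas : Measurable f := ((KK_meas α 1).comp measurable_neg).pow_const 2
  have P1 : IntegrableOn f (Iic (-1)) := by
    refine (integrableOn_zero).congr_fun (fun y hy => ?_) measurableSet_Iic
    simp only [Set.mem_Iic] at hy
    have h1 : max (1 - -y) 0 = 0 := max_eq_right (by linarith)
    have h2 : max (- -y) 0 = 0 := max_eq_right (by linarith)
    have hz : KK α 1 (-y) = 0 := by
      unfold KK; rw [h1, h2, Real.zero_rpow hα0, sub_self]
    simp [hf, hz]
  have P2 : IntegrableOn f (Ioc (-1) 0) := by
    have hii : IntervalIntegrable (fun y : ℝ => (1+y)^(α+α)) volume (-1) 0 := by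
      have h := (intervalIntegral.intervalIntegrable_rpow' (a := 0) (b := 1)
        (r := α + α) (by linarith)).comp_add_left 1
      norm_num at h
      exact h
    refine hii.1.congr_fun (fun y hy => ?_) measurableSet_Ioc
    simp only [Set.mem_Ioc] at hy
    have h1 : max (1 - -y) 0 = 1 + y := by
      rw [show (1:ℝ) - -y = 1 + y by ring]; exact max_eq_left (by linarith)
    have h2 : max (- -y) 0 = 0 := max_eq_right (by linarith)
    have hz : KK α 1 (-y) = (1+y)^α := by
      unfold KK; rw [h1, h2, Real.zero_rpow hα0, sub_zero]
    simp only [hf, hz]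
    rw [sq, ← Real.rpow_add' (by linarith) (two_alpha_ne hα0)]
  have P3 : IntegrableOn f (Ioc 0 1) := by
    have hg : IntegrableOn (fun y : ℝ => 2*(2^(α+α)+1) + 2*y^(α+α)) (Ioc 0 1) := by
      refine ((integrableOn_const_iff (C := (2*(2^(α+α)+1) : ℝ))).mpr (Or.inr ?_)).add
        (((intervalIntegral.intervalIntegrable_rpow' (by linarith)).1).const_mul 2)
      simp [measure_Ioc_lt_top]
    refine Integrable.mono' hg (hmeas.aestronglyMeasurable.restrict) ?_
    rw [ae_restrict_iff' measurableSet_Ioc]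
    refine ae_of_all _ (fun y hy => ?_)
    simp only [Set.mem_Ioc] at hy
    have h1 : max (1 - -y) 0 = 1 + y := by
      rw [show (1:ℝ) - -y = 1 + y by ring]; exact max_eq_left (by linarith)
    have h2 : max (- -y) 0 = y := by rw [neg_neg]; exact max_eq_left (by linarith)
    have hfy : f y = ((1+y)^α - y^α)^2 := by
      simp only [hf]; unfold KK; rw [h1, h2]
    have hA : ((1+y)^α)^2 = (1+y)^(α+α) := by
      rw [sq, ← Real.rpow_add' (by linarith) (two_alpha_ne hα0)]
    have hB : (y^α)^2 = y^(α+α) := by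
      rw [sq, ← Real.rpow_add' (by linarith) (two_alpha_ne hα0)]
    have h2a : (1+y)^(α+α) ≤ 2^(α+α) + 1 := by
      rcases le_or_gt 0 (α+α) with h|h
      · exact le_trans (Real.rpow_le_rpow (by linarith) (by linarith) h)
          (le_add_of_nonneg_right zero_le_one)
      · refine le_trans (Real.rpow_le_one_of_one_le_of_nonpos (by linarith) h.le) ?_
        have := Real.rpow_nonneg (by norm_num : (0:ℝ) ≤ 2) (α+α)
        linarith
    have hBnn : (0:ℝ) ≤ y^(α+α) := Real.rpow_nonneg (by linarith) _
    rw [Real.norm_eq_abs, hfy, abs_of_nonneg (sq_nonneg ((1+y)^α - y^α))]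
    nlinarith [sq_nonneg ((1+y)^α + y^α), hA, hB, h2a, hBnn]
  have P4 : IntegrableOn f (Ioi 1) := by
    have hg : IntegrableOn (fun y : ℝ => α^2 * y^(α-1+(α-1))) (Ioi 1) := by
      exact (integrableOn_Ioi_rpow_of_lt (by linarith) one_pos).const_mul _
    refine Integrable.mono' hg (hmeas.aestronglyMeasurable.restrict) ?_
    rw [ae_restrict_iff' measurableSet_Ioi]
    refine ae_of_all _ (fun y hy => ?_)
    simp only [Set.mem_Ioi] at hy
    have hy0 : (0:ℝ) < y := by linarith
    have h1 : max (1 - -y) 0 = 1 + y := by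
      rw [show (1:ℝ) - -y = 1 + y by ring]; exact max_eq_left (by linarith)
    have h2 : max (- -y) 0 = y := by rw [neg_neg]; exact max_eq_left (by linarith)
    set I : ℝ := ∫ z in y..(1+y), z^(α-1) with hI
    have hIval : I = ((1+y)^α - y^α)/α := by
      rw [hI, integral_rpow (Or.inr ⟨by intro h; exact hα0 (by linarith),
        by rw [Set.uIcc_of_le (by linarith)]; intro h; exact absurd (Set.mem_Icc.mp h).1 (by linarith)⟩)]
      have h : α - 1 + 1 = α := by ring
      rw [h]
    have hIb : |I| ≤ y^(α-1) := by
      have := intervalIntegral.norm_integral_le_of_norm_le_const (C := y^(α-1))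
        (f := fun z : ℝ => z^(α-1)) (a := y) (b := 1+y) ?_
      · rw [Real.norm_eq_abs] at this
        have habs : |1 + y - y| = 1 := by norm_num
        rw [habs, mul_one] at this
        exact this
      · intro z hz
        rw [Set.uIoc_of_le (by linarith)] at hz
        have hz1 : y < z := hz.1
        rw [Real.norm_eq_abs, abs_of_nonneg (Real.rpow_nonneg (by linarith) _)]
        exact Real.rpow_le_rpow_of_nonpos hy0 hz1.le (by linarith)
    have hKI : KK α 1 (-y) = α * I := by
      rw [hIval]; field_simp; unfold KK; rw [h1, h2]
    have hsq : ((y:ℝ)^(α-1))^2 = y^(α-1+(α-1)) := by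
      rw [sq, ← Real.rpow_add' (by linarith) (by intro h; linarith)]
    have hfy : f y = (α * I)^2 := by simp only [hf, hKI]
    rw [Real.norm_eq_abs, hfy, abs_of_nonneg (sq_nonneg (α * I)), mul_pow]
    have h5 : I^2 ≤ (y^(α-1))^2 := sq_le_sq' (by linarith [(abs_le.mp hIb).1]) (abs_le.mp hIb).2
    rw [← hsq]
    nlinarith [sq_nonneg α]
  have huniv : Iic (-1:ℝ) ∪ (Ioc (-1:ℝ) 0 ∪ (Ioc (0:ℝ) 1 ∪ Ioi 1)) = Set.univ := by
    ext y
    simp only [Set.mem_union, Set.mem_Iic, Set.mem_Ioc, Set.mem_Ioi, Set.mem_univ, iff_true]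
    rcases le_or_gt y (-1) with h|h
    · exact Or.inl h
    rcases le_or_gt y 0 with h2|h2
    · exact Or.inr (Or.inl ⟨h, h2⟩)
    rcases le_or_gt y 1 with h3|h3
    · exact Or.inr (Or.inr (Or.inl ⟨h2, h3⟩))
    · exact Or.inr (Or.inr (Or.inr h3))
  have : IntegrableOn f (Iic (-1) ∪ (Ioc (-1) 0 ∪ (Ioc 0 1 ∪ Ioi 1))) :=
    P1.union (P2.union (P3.union P4))
  rw [huniv] at this
  exact integrableOn_univ.mp this

end

noncomputable def CC (α : ℝ) : ℝ := ∫ x, (KK α 1 x)^2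

section
variable {α : ℝ} (hα0 : α ≠ 0) (hα1 : -(1/2) < α) (hα2 : α < 1/2)
include hα0 hα1 hα2

lemma integrable_KK1_sq : Integrable (fun x => (KK α 1 x)^2) := by
  have h := (integrable_J_sq hα0 hα1 hα2).comp_neg
  simpa using h

omit hα0 hα1 hα2 in
lemma KK_zero (x : ℝ) : KK α 0 x = 0 := by
  unfold KK; rw [zero_sub]; exact sub_self _

omit hα0 hα1 hα2 in
lemma KK_neg_arg (u x : ℝ) : KK α u x = - KK α (-u) (x - u) := by
  have h := KK_neg α (-u) (x - u)
  rw [neg_neg, show x - u - -u = x by ring] at h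
  exact h

omit hα0 hα1 hα2 in
lemma KK_scale_eq {u : ℝ} (hu : 0 < u) (x : ℝ) :
    KK α u x = u ^ α * KK α 1 (u⁻¹ * x) := by
  have h := KK_scale α hu 1 (u⁻¹ * x)
  rw [mul_one, mul_inv_cancel_left₀ (ne_of_gt hu)] at h
  exact h

lemma integrable_KK_sq (u : ℝ) : Integrable (fun x => (KK α u x)^2) := by
  rcases lt_trichotomy u 0 with hu | hu | hu
  · have hpos : 0 < -u := by linarith
    have h1 : Integrable (fun x => (KK α (-u) x)^2) := by
      have h := (integrable_KK1_sq hα0 hα1 hα2).const_mul ((-u) ^ (α + α))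
      have h2 : Integrable (fun x => (KK α 1 ((-u)⁻¹ * x))^2) :=
        (integrable_comp_mul_left_iff (fun x => (KK α 1 x)^2)
          (inv_ne_zero (ne_of_gt hpos))).mpr (integrable_KK1_sq hα0 hα1 hα2)
      have h3 := h2.const_mul ((-u) ^ α * (-u) ^ α)
      refine h3.congr (ae_of_all _ (fun x => ?_))
      dsimp only
      rw [KK_scale_eq hpos x]; ring
    have h2 := h1.comp_sub_right u
    refine h2.congr (ae_of_all _ (fun x => ?_))
    dsimp only
    rw [KK_neg_arg (α := α) u x]; ring
  · subst hu
    refine (integrable_zero _ _ _).congr (ae_of_all _ (fun x => ?_))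
    dsimp only
    rw [KK_zero (α := α) x]; simp
  · have h2 : Integrable (fun x => (KK α 1 (u⁻¹ * x))^2) :=
      (integrable_comp_mul_left_iff (fun x => (KK α 1 x)^2)
        (inv_ne_zero (ne_of_gt hu))).mpr (integrable_KK1_sq hα0 hα1 hα2)
    have h3 := h2.const_mul ((u) ^ α * (u) ^ α)
    refine h3.congr (ae_of_all _ (fun x => ?_))
    dsimp only
    rw [KK_scale_eq hu x]; ring

lemma integral_KK_sq_pos {u : ℝ} (hu : 0 < u) :
    ∫ x, (KK α u x)^2 = u ^ (α + α + 1) * CC α := by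
  have key : ∀ x, (KK α u x)^2 = (u ^ α * u ^ α) * (KK α 1 (u⁻¹ * x))^2 := by
    intro x; rw [KK_scale_eq hu x]; ring
  calc ∫ x, (KK α u x)^2 = ∫ x, (u ^ α * u ^ α) * (KK α 1 (u⁻¹ * x))^2 := by
        exact integral_congr_ae (ae_of_all _ key)
    _ = (u ^ α * u ^ α) * ∫ x, (KK α 1 (u⁻¹ * x))^2 := MeasureTheory.integral_const_mul _ _
    _ = (u ^ α * u ^ α) * (|(u⁻¹)⁻¹| • ∫ x, (KK α 1 x)^2) := by
        rw [Measure.integral_comp_mul_left (fun x => (KK α 1 x)^2) u⁻¹]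
    _ = u ^ (α + α + 1) * CC α := by
        rw [inv_inv, abs_of_pos hu, smul_eq_mul, CC]
        rw [show α + α + 1 = (α + α) + 1 from rfl, Real.rpow_add hu,
          Real.rpow_add hu, Real.rpow_one]
        ring

lemma integral_KK_sq (u : ℝ) : ∫ x, (KK α u x)^2 = |u| ^ (α + α + 1) * CC α := by
  rcases lt_trichotomy u 0 with hu | hu | hu
  · have hpos : 0 < -u := by linarith
    have h1 : ∀ x, (KK α u x)^2 = (fun y => (KK α (-u) y)^2) (x - u) := by
      intro x; rw [KK_neg_arg (α := α) u x]; ring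
    rw [integral_congr_ae (ae_of_all _ h1),
      integral_sub_right_eq_self (fun y => (KK α (-u) y)^2) u,
      integral_KK_sq_pos hα0 hα1 hα2 hpos, abs_of_neg hu]
  · subst hu
    simp only [abs_zero]
    rw [Real.zero_rpow (by intro h; linarith : α + α + 1 ≠ 0)]
    have : ∀ x : ℝ, (KK α 0 x)^2 = 0 := fun x => by rw [KK_zero (α := α) x]; ring
    rw [integral_congr_ae (ae_of_all _ this)]
    simp
  · rw [integral_KK_sq_pos hα0 hα1 hα2 hu, abs_of_pos hu]

end

section
variable {α : ℝ} (hα0 : α ≠ 0) (hα1 : -(1/2) < α) (hα2 : α < 1/2)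
include hα0 hα1 hα2

lemma integrable_KK_mul (u v : ℝ) : Integrable (fun x => KK α u x * KK α v x) := by
  have hg : Integrable (fun x => 1/2 * ((KK α u x)^2 + (KK α v x)^2)) :=
    ((integrable_KK_sq hα0 hα1 hα2 u).add (integrable_KK_sq hα0 hα1 hα2 v)).const_mul (1/2)
  refine Integrable.mono' hg
    ((KK_meas α u).mul (KK_meas α v)).aestronglyMeasurable (ae_of_all _ (fun x => ?_))
  rw [Real.norm_eq_abs, abs_mul]
  nlinarith [sq_nonneg (|KK α u x| - |KK α v x|), sq_abs (KK α u x), sq_abs (KK α v x),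
    abs_nonneg (KK α u x), abs_nonneg (KK α v x)]

lemma integral_KK_mul (u v : ℝ) :
    ∫ x, KK α u x * KK α v x
      = CC α / 2 * (|u| ^ (α+α+1) + |v| ^ (α+α+1) - |u - v| ^ (α+α+1)) := by
  have h1 : ∫ x, (KK α u x - KK α v x)^2 = |u - v| ^ (α+α+1) * CC α := by
    have hsub : ∀ x, (KK α u x - KK α v x)^2 = (fun y => (KK α (u-v) y)^2) (x - v) := by
      intro x; dsimp only; rw [← KK_sub]
    rw [integral_congr_ae (ae_of_all _ hsub),
      integral_sub_right_eq_self (fun y => (KK α (u-v) y)^2) v,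
      integral_KK_sq hα0 hα1 hα2 (u - v)]
  have h2 : ∫ x, (KK α u x - KK α v x)^2
      = |u| ^ (α+α+1) * CC α - 2 * (∫ x, KK α u x * KK α v x) + |v| ^ (α+α+1) * CC α := by
    have hexp : ∀ x, (KK α u x - KK α v x)^2
        = ((KK α u x)^2 - 2 * (KK α u x * KK α v x)) + (KK α v x)^2 := by intro x; ring
    have I1 : Integrable (fun x => (KK α u x)^2 - 2 * (KK α u x * KK α v x)) :=
      (integrable_KK_sq hα0 hα1 hα2 u).sub ((integrable_KK_mul hα0 hα1 hα2 u v).const_mul 2)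
    rw [integral_congr_ae (ae_of_all _ hexp),
      integral_add I1 (integrable_KK_sq hα0 hα1 hα2 v),
      integral_sub (integrable_KK_sq hα0 hα1 hα2 u)
        ((integrable_KK_mul hα0 hα1 hα2 u v).const_mul 2),
      MeasureTheory.integral_const_mul,
      integral_KK_sq hα0 hα1 hα2 u, integral_KK_sq hα0 hα1 hα2 v]
  linarith [h1, h2]

omit hα2 in
lemma rint (s t : ℝ) (hst : s ≤ t) :
    ∫ x in Ioc s t, ((max (t - x) 0) ^ α)^2 = (t-s)^(α+α+1)/(α+α+1) := by
  have h2a : α + α ≠ 0 := by intro h; exact hα0 (by linarith)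
  have h1 : EqOn (fun x => ((max (t-x) 0)^α)^2) (fun x => (t-x)^(α+α)) (Ioc s t) := by
    intro x hx
    dsimp only
    rw [max_eq_left (by linarith [hx.2] : (0:ℝ) ≤ t - x), sq,
      ← Real.rpow_add' (by linarith [hx.2]) h2a]
  rw [setIntegral_congr_fun measurableSet_Ioc h1, ← intervalIntegral.integral_of_le hst,
    intervalIntegral.integral_comp_sub_left (fun y => y^(α+α)) t, sub_self,
    integral_rpow (Or.inl (by linarith)),
    Real.zero_rpow (by intro h; linarith : α+α+1 ≠ 0)]
  ring

lemma CC_pos : 0 < CC α := by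
  have hle : ∫ x in Ioc (0:ℝ) 1, (KK α 1 x)^2 ≤ CC α :=
    setIntegral_le_integral (integrable_KK1_sq hα0 hα1 hα2)
      (ae_of_all _ (fun x => sq_nonneg _))
  have heq : ∫ x in Ioc (0:ℝ) 1, (KK α 1 x)^2
      = ∫ x in Ioc (0:ℝ) 1, ((max (1 - x) 0) ^ α)^2 := by
    refine setIntegral_congr_fun measurableSet_Ioc (fun x hx => ?_)
    unfold KK
    rw [max_eq_right (by linarith [hx.1] : -x ≤ 0), Real.zero_rpow hα0, sub_zero]
  rw [heq, rint hα0 hα1 0 1 zero_le_one] at hle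
  have : (0:ℝ) < (1-0:ℝ)^(α+α+1)/(α+α+1) := by
    rw [show (1:ℝ)-0 = 1 by norm_num, Real.one_rpow]
    have h3 : 0 < α+α+1 := by linarith
    positivity
  linarith
end

lemma key_s16 {α : ℝ} (hα0 : α ≠ 0) (hα1 : -(1/2) < α) (hα2 : α < 1/2)
    (s t b : ℝ) (hs : 0 ≤ s) (hst : s ≤ t) :
    (t - s) ^ (α+α+1) / ((α+α+1) * (2 * CC α)) ≤
      subCov (α+1/2) t t - 2*b*subCov (α+1/2) s t + b^2 * subCov (α+1/2) s s := by
  have hE : (0:ℝ) < α+α+1 := by linarith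
  have hEne : α+α+1 ≠ 0 := ne_of_gt hE
  set w : Fin 4 → ℝ := ![t, -t, s, -s] with hw
  set cc : Fin 4 → ℝ := ![1, 1, -b, -b] with hcc
  set F : ℝ → ℝ := fun x => ∑ i, cc i * KK α (w i) x with hF
  have hexp : ∀ x, F x ^ 2
      = ∑ i : Fin 4, ∑ j : Fin 4, (cc i * cc j) * (KK α (w i) x * KK α (w j) x) := by
    intro x
    rw [hF, sq, Finset.sum_mul_sum]
    exact Finset.sum_congr rfl fun i _ => Finset.sum_congr rfl fun j _ => by ring
  have hIntTerm : ∀ i j : Fin 4,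
      Integrable (fun x => (cc i * cc j) * (KK α (w i) x * KK α (w j) x)) :=
    fun i j => (integrable_KK_mul hα0 hα1 hα2 _ _).const_mul _
  have hIntInner : ∀ i : Fin 4,
      Integrable (fun x => ∑ j : Fin 4, (cc i * cc j) * (KK α (w i) x * KK α (w j) x)) :=
    fun i => integrable_finset_sum Finset.univ (fun j _ => hIntTerm i j)
  have hIntF2 : Integrable (fun x => F x ^ 2) :=
    (integrable_finset_sum Finset.univ (fun i _ => hIntInner i)).congr
      (ae_of_all _ fun x => (hexp x).symm)
  have hval : ∫ x, F x ^ 2 = ∑ i : Fin 4, ∑ j : Fin 4,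
      (cc i * cc j) * (CC α / 2 * (|w i| ^ (α+α+1) + |w j| ^ (α+α+1) - |w i - w j| ^ (α+α+1))) := by
    rw [integral_congr_ae (ae_of_all _ hexp), integral_finset_sum _ (fun i _ => hIntInner i)]
    refine Finset.sum_congr rfl fun i _ => ?_
    rw [integral_finset_sum _ (fun j _ => hIntTerm i j)]
    refine Finset.sum_congr rfl fun j _ => ?_
    rw [MeasureTheory.integral_const_mul, integral_KK_mul hα0 hα1 hα2]
  have ht0 : 0 ≤ t := le_trans hs hst
  have hQ : ∫ x, F x ^ 2 = 2 * CC α *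
      (subCov (α+1/2) t t - 2*b*subCov (α+1/2) s t + b^2 * subCov (α+1/2) s s) := by
    rw [hval]
    simp only [hw, hcc, Fin.sum_univ_four, Matrix.cons_val_zero, Matrix.cons_val_one,
      Matrix.head_cons, Matrix.cons_val_two, Matrix.tail_cons, Matrix.cons_val_three,
      Matrix.head_fin_const, sub_self, sub_neg_eq_add, abs_neg, abs_zero, neg_sub_neg]
    have e0 : (0:ℝ) ^ (α+α+1) = 0 := Real.zero_rpow hEne
    have n1 : |-t - t| = |t + t| := by rw [show -t - t = -(t+t) by ring, abs_neg]
    have n2 : |-t + t| = (0:ℝ) := by rw [show -t + t = (0:ℝ) by ring, abs_zero]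
    have n3 : |-t - s| = |t + s| := by rw [show -t - s = -(t+s) by ring, abs_neg]
    have n4 : |-t + s| = |t - s| := by rw [show -t + s = -(t-s) by ring, abs_neg]
    have n5 : |s - t| = |t - s| := abs_sub_comm s t
    have n6 : |s + t| = |t + s| := by rw [add_comm s t]
    have n7 : |-s - t| = |t + s| := by rw [show -s - t = -(t+s) by ring, abs_neg]
    have n8 : |-s + t| = |t - s| := by rw [show -s + t = t - s by ring]
    have n9 : |-s - s| = |s + s| := by rw [show -s - s = -(s+s) by ring, abs_neg]
    have n10 : |-s + s| = (0:ℝ) := by rw [show -s + s = (0:ℝ) by ring, abs_zero]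
    have a1 : |t| = t := abs_of_nonneg ht0
    have a2 : |s| = s := abs_of_nonneg hs
    have a3 : |t + t| = t + t := abs_of_nonneg (by linarith)
    have a4 : |s + s| = s + s := abs_of_nonneg (by linarith)
    have a5 : |t + s| = t + s := abs_of_nonneg (by linarith)
    have a6 : |t - s| = t - s := abs_of_nonneg (by linarith)
    rw [n1, n2, n3, n4, n5, n6, n7, n8, n9, n10, e0, a1, a2, a3, a4, a5, a6]
    simp only [subCov]
    rw [show 2*(α+1/2) = α+α+1 by ring, sub_self t, sub_self s, abs_zero, e0,
      show s + t = t + s from add_comm s t, a6]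
    ring
  have hlow : ∫ x in Ioc s t, F x ^ 2 ≤ ∫ x, F x ^ 2 :=
    setIntegral_le_integral hIntF2 (ae_of_all _ fun x => sq_nonneg _)
  have hIoc : ∫ x in Ioc s t, F x ^ 2 = (t-s)^(α+α+1)/(α+α+1) := by
    have heq : EqOn (fun x => F x ^ 2) (fun x => ((max (t - x) 0) ^ α)^2) (Ioc s t) := by
      intro x hx
      have hxs : s < x := hx.1
      have hxt : x ≤ t := hx.2
      have hx0 : 0 < x := lt_of_le_of_lt hs hxs
      have e1 : KK α (-t) x = 0 := by
        unfold KK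
        rw [max_eq_right (by linarith : -t - x ≤ 0), max_eq_right (by linarith : -x ≤ 0), sub_self]
      have e2 : KK α s x = 0 := by
        unfold KK
        rw [max_eq_right (by linarith : s - x ≤ 0), max_eq_right (by linarith : -x ≤ 0), sub_self]
      have e3 : KK α (-s) x = 0 := by
        unfold KK
        rw [max_eq_right (by linarith : -s - x ≤ 0), max_eq_right (by linarith : -x ≤ 0), sub_self]
      have e4 : KK α t x = (max (t - x) 0) ^ α := by
        unfold KK
        rw [max_eq_right (by linarith : -x ≤ 0), Real.zero_rpow hα0, sub_zero]
      dsimp only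
      rw [hF]
      simp only [hw, hcc, Fin.sum_univ_four, Matrix.cons_val_zero, Matrix.cons_val_one,
        Matrix.head_cons, Matrix.cons_val_two, Matrix.tail_cons, Matrix.cons_val_three,
        Matrix.head_fin_const]
      rw [e1, e2, e3, e4]; ring
    rw [setIntegral_congr_fun measurableSet_Ioc heq, rint hα0 hα1 s t hst]
  have hCC := CC_pos hα0 hα1 hα2
  have h1 : (t-s)^(α+α+1)/(α+α+1) ≤ 2 * CC α *
      (subCov (α+1/2) t t - 2*b*subCov (α+1/2) s t + b^2 * subCov (α+1/2) s s) := by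
    rw [← hQ, ← hIoc]; exact hlow
  rw [div_le_iff₀ (by positivity : (0:ℝ) < (α+α+1) * (2 * CC α))]
  rw [div_le_iff₀ hE] at h1
  nlinarith [h1]

end Aux

section Main
open MeasureTheory

lemma subCov_quad (H : ℝ) (h0 : 0 < H) (h1 : H < 1) :
    ∃ k : ℝ, 0 < k ∧ ∀ s t b : ℝ, 0 ≤ s → s ≤ t →
      k * (t - s) ^ (2 * H) ≤ subCov H t t - 2*b*subCov H s t + b^2 * subCov H s s := by
  by_cases hH : H = 1/2
  · subst hH
    refine ⟨1, one_pos, fun s t b hs hst => ?_⟩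
    unfold subCov
    rw [show (2:ℝ) * (1/2) = 1 by norm_num]
    simp only [Real.rpow_one]
    rw [sub_self t, sub_self s, abs_zero, abs_of_nonneg (sub_nonneg.2 hst)]
    nlinarith [mul_nonneg hs (sq_nonneg (1 - b))]
  · set α := H - 1/2 with hαdef
    have hα0 : α ≠ 0 := fun h => hH (by rw [hαdef] at h; linarith)
    have hα1 : -(1/2) < α := by rw [hαdef]; linarith
    have hα2 : α < 1/2 := by rw [hαdef]; linarith
    have hCC := CC_pos hα0 hα1 hα2
    have hE : (0:ℝ) < α + α + 1 := by rw [hαdef]; linarith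
    refine ⟨1/((α+α+1) * (2 * CC α)), by positivity, fun s t b hs hst => ?_⟩
    have hk := key_s16 hα0 hα1 hα2 s t b hs hst
    rw [show α + 1/2 = H by rw [hαdef]; ring] at hk
    calc 1/((α+α+1) * (2 * CC α)) * (t - s) ^ (2 * H)
        = (t - s) ^ (α+α+1) / ((α+α+1) * (2 * CC α)) := by
          rw [show 2 * H = α+α+1 by rw [hαdef]; ring]; ring
      _ ≤ _ := hk

/-- Local nondeterminism of the msfBm: with `H_{i₀} = min{H_i : a_i ≠ 0}` and `T > 0`,
there is `c > 0` such that for all `0 ≤ s ≤ t ≤ T`,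
`inf_b (C(t,t) − 2b C(s,t) + b² C(s,s)) ≥ c (t−s)^{2H_{i₀}}`
(the left side is the conditional variance `Var(S^H(t) | S^H(s))`). -/
theorem msfbm_local_nondeterminism (N : ℕ) (a H : Fin N → ℝ)
    (hH : ∀ i, H i ∈ Set.Ioo (0 : ℝ) 1) (ha : a ≠ 0)
    (Hmin : ℝ) (hHmin : IsLeast {h : ℝ | ∃ i, a i ≠ 0 ∧ H i = h} Hmin)
    (T : ℝ) (hT : 0 < T) :
    ∃ c : ℝ, 0 < c ∧ ∀ s t : ℝ, 0 ≤ s → s ≤ t → t ≤ T → ∀ b : ℝ,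
      c * (t - s) ^ (2 * Hmin) ≤
        mixedCov N a H t t - 2 * b * mixedCov N a H s t
          + b ^ 2 * mixedCov N a H s s := by
  obtain ⟨i0, hai0, hHi0⟩ := hHmin.1
  have hks : ∀ i : Fin N, ∃ k : ℝ, 0 < k ∧ ∀ s t b : ℝ, 0 ≤ s → s ≤ t →
      k * (t - s) ^ (2 * H i) ≤ subCov (H i) t t - 2*b*subCov (H i) s t
        + b^2 * subCov (H i) s s :=
    fun i => subCov_quad (H i) (hH i).1 (hH i).2
  choose k hk0 hkq using hks
  have hai2 : 0 < a i0 ^ 2 :=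
    lt_of_le_of_ne (sq_nonneg _) (Ne.symm (pow_ne_zero 2 hai0))
  refine ⟨a i0 ^ 2 * k i0, mul_pos hai2 (hk0 i0), fun s t hs hst _ b => ?_⟩
  have hsum : mixedCov N a H t t - 2 * b * mixedCov N a H s t + b ^ 2 * mixedCov N a H s s
      = ∑ i, a i ^ 2 * (subCov (H i) t t - 2*b*subCov (H i) s t + b^2 * subCov (H i) s s) := by
    unfold mixedCov
    rw [Finset.mul_sum, Finset.mul_sum, ← Finset.sum_sub_distrib, ← Finset.sum_add_distrib]
    exact Finset.sum_congr rfl fun i _ => by ring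
  rw [hsum, ← hHi0]
  calc a i0 ^ 2 * k i0 * (t - s) ^ (2 * H i0)
      = a i0 ^ 2 * (k i0 * (t - s) ^ (2 * H i0)) := by ring
    _ ≤ a i0 ^ 2 * (subCov (H i0) t t - 2*b*subCov (H i0) s t + b^2 * subCov (H i0) s s) :=
        mul_le_mul_of_nonneg_left (hkq i0 s t b hs hst) (sq_nonneg _)
    _ ≤ ∑ i, a i ^ 2 * (subCov (H i) t t - 2*b*subCov (H i) s t + b^2 * subCov (H i) s s) := by
        refine Finset.single_le_sum (f := fun i => a i ^ 2 * (subCov (H i) t t - 2*b*subCov (H i) s t + b^2 * subCov (H i) s s)) (fun i _ => ?_) (Finset.mem_univ i0)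
        have h1 : 0 ≤ k i * (t - s) ^ (2 * H i) :=
          mul_nonneg (hk0 i).le (Real.rpow_nonneg (by linarith) _)
        exact mul_nonneg (sq_nonneg _) (le_trans h1 (hkq i s t b hs hst))

end Main
end

section
/- Square integrability of the mixed sub-fractional kernel: let T > 0, let H = (H_1,…,H_N) ∈ (0,1)^N with H_i ∈ {1/2} ∪ (3/4, 1) for every i, and let (b_i) be real coefficients. Then the function (s,t) ↦ Σ_{i=1}^N b_i² H_i(2H_i−1) ( |t−s|^{2H_i−2} − (s+t)^{2H_i−2} ) belongs to L²([0,T]², Lebesgue). (This is the mixed second partial derivative ∂²R/∂s∂t of the covariance R(s,t) = Σ_i b_i² c_{H_i}(s,t) off the diagonal; its L² membership is the key hypothesis yielding that a Brownian motion plus the independent mixture Σ b_i ξ^{H_i} is, in its own filtration, a semimartingale equivalent in law to a Brownian motion.) -/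
open Real Finset MeasureTheory
open scoped ENNReal

lemma aux_lint_rpow (T β : ℝ) (hT : 0 ≤ T) (hβ : -1 < β) :
    ∫⁻ u in Set.Icc (0:ℝ) T, ENNReal.ofReal (u ^ β) < ⊤ := by
  have h := intervalIntegral.intervalIntegrable_rpow' (a := 0) (b := T) hβ
  rw [intervalIntegrable_iff_integrableOn_Ioc_of_le hT] at h
  have hfin := h.2
  rw [← Measure.restrict_congr_set Ioc_ae_eq_Icc]
  refine lt_of_le_of_lt (lintegral_mono fun u => ?_) hfin
  exact Real.ofReal_le_enorm _

lemma aux_lint_abs (T β : ℝ) (hT : 0 ≤ T) (hβ : -1 < β) :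
    ∫⁻ u in Set.Icc (-T) T, ENNReal.ofReal (|u| ^ β) < ⊤ := by
  have hI : ∫⁻ u in Set.Icc (0:ℝ) T, ENNReal.ofReal (|u| ^ β) < ⊤ := by
    have hcg : ∀ u ∈ Set.Icc (0:ℝ) T,
        ENNReal.ofReal (|u| ^ β) = ENNReal.ofReal (u ^ β) := by
      intro u hu; rw [abs_of_nonneg hu.1]
    rw [setLIntegral_congr_fun measurableSet_Icc hcg]
    exact aux_lint_rpow T β hT hβ
  have hneg : ∫⁻ u in Set.Icc (-T) (0:ℝ), ENNReal.ofReal (|u| ^ β) < ⊤ := by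
    have hpre : (fun u : ℝ => -u) ⁻¹' Set.Icc (0:ℝ) T = Set.Icc (-T) 0 := by
      ext x
      simp only [Set.mem_preimage, Set.mem_Icc]
      constructor <;> rintro ⟨h1, h2⟩ <;> constructor <;> linarith
    have key := (Measure.measurePreserving_neg (volume : Measure ℝ)).setLIntegral_comp_preimage_emb
      (MeasurableEquiv.neg ℝ).measurableEmbedding
      (fun u => ENNReal.ofReal (|u| ^ β)) (Set.Icc 0 T)
    simp only [abs_neg] at key
    rw [hpre] at key
    rw [key]; exact hI
  have hsplit : Set.Icc (-T) T = Set.Icc (-T) 0 ∪ Set.Icc 0 T :=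
    (Set.Icc_union_Icc_eq_Icc (neg_nonpos.mpr hT) hT).symm
  rw [hsplit]
  refine lt_of_le_of_lt (lintegral_mono' (Measure.restrict_union_le _ _) le_rfl) ?_
  rw [lintegral_add_measure]
  exact ENNReal.add_lt_top.mpr ⟨hneg, hI⟩

lemma aux_ker_lint (T β : ℝ) (hT : 0 ≤ T) (hβ : -1 < β) :
    ∫⁻ p in Set.Icc (0:ℝ) T ×ˢ Set.Icc (0:ℝ) T,
      ENNReal.ofReal (|p.2 - p.1| ^ β) < ⊤ := by
  have hmeas : Measurable fun p : ℝ × ℝ => ENNReal.ofReal (|p.2 - p.1| ^ β) := by fun_prop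
  rw [Measure.volume_eq_prod, ← Measure.prod_restrict,
    lintegral_prod _ hmeas.aemeasurable]
  set C := ∫⁻ u in Set.Icc (-T) T, ENNReal.ofReal (|u| ^ β) with hC
  have hbound : ∀ s ∈ Set.Icc (0:ℝ) T,
      ∫⁻ t in Set.Icc (0:ℝ) T, ENNReal.ofReal (|t - s| ^ β) ≤ C := by
    intro s hs
    have hsub : Set.Icc (0:ℝ) T ⊆ (fun t => t - s) ⁻¹' Set.Icc (-T) T := by
      intro t ht
      simp only [Set.mem_preimage, Set.mem_Icc]
      exact ⟨by linarith [ht.1, hs.2], by linarith [ht.2, hs.1]⟩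
    calc ∫⁻ t in Set.Icc (0:ℝ) T, ENNReal.ofReal (|t - s| ^ β)
        ≤ ∫⁻ t in (fun t => t - s) ⁻¹' Set.Icc (-T) T,
            ENNReal.ofReal (|t - s| ^ β) := lintegral_mono_set hsub
      _ = C := (measurePreserving_sub_right volume s).setLIntegral_comp_preimage_emb
          (MeasurableEquiv.subRight s).measurableEmbedding
          (fun u => ENNReal.ofReal (|u| ^ β)) (Set.Icc (-T) T)
  have hCfin : C < ⊤ := aux_lint_abs T β hT hβ
  have hmain : (∫⁻ s in Set.Icc (0:ℝ) T,
      ∫⁻ t in Set.Icc (0:ℝ) T, ENNReal.ofReal (|t - s| ^ β)) ≤ C * volume (Set.Icc (0:ℝ) T) := by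
    rw [← setLIntegral_const]
    exact setLIntegral_mono measurable_const hbound
  refine lt_of_le_of_lt hmain (ENNReal.mul_lt_top hCfin ?_)
  rw [Real.volume_Icc]
  exact ENNReal.ofReal_lt_top

lemma aux_strip_lint (T β : ℝ) (hT : 0 ≤ T) (hβ : -1 < β) :
    ∫⁻ p in Set.Icc (0:ℝ) T ×ˢ Set.Icc (0:ℝ) T,
      ENNReal.ofReal (p.1 ^ β) < ⊤ := by
  have hmeas : Measurable fun p : ℝ × ℝ => ENNReal.ofReal (p.1 ^ β) := by fun_prop
  rw [Measure.volume_eq_prod, ← Measure.prod_restrict,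
    lintegral_prod _ hmeas.aemeasurable]
  simp only [lintegral_const, Measure.restrict_apply, Set.univ_inter,
    Measure.restrict_apply_univ]
  rw [lintegral_mul_const' _ _ (by rw [Real.volume_Icc]; exact ENNReal.ofReal_ne_top)]
  refine ENNReal.mul_lt_top (aux_lint_rpow T β hT hβ) ?_
  rw [Real.volume_Icc]; exact ENNReal.ofReal_lt_top

lemma sq_norm_eq (α : ℝ) (x : ℝ) (hx : 0 ≤ x) :
    ((‖x ^ α‖₊ : ℝ≥0∞)) ^ (2:ℝ) = ENNReal.ofReal (x ^ (α * 2)) := by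
  rw [← enorm_eq_nnnorm, Real.enorm_eq_ofReal_abs, abs_of_nonneg (Real.rpow_nonneg hx _),
    ENNReal.ofReal_rpow_of_nonneg (Real.rpow_nonneg hx _) (by norm_num),
    ← Real.rpow_mul hx]

lemma memL2_f (T α : ℝ) (hT : 0 ≤ T) (hα : -(1/2 : ℝ) < α) :
    MemLp (fun p : ℝ × ℝ => |p.2 - p.1| ^ α) 2
      (volume.restrict (Set.Icc (0 : ℝ) T ×ˢ Set.Icc (0 : ℝ) T)) := by
  have hmeas : Measurable fun p : ℝ × ℝ => |p.2 - p.1| ^ α := by fun_prop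
  refine ⟨hmeas.aestronglyMeasurable, ?_⟩
  rw [eLpNorm_lt_top_iff_lintegral_rpow_enorm_lt_top (by norm_num) (by norm_num)]
  simp only [enorm_eq_nnnorm]
  simp only [ENNReal.toReal_ofNat]
  have hcg : ∀ p : ℝ × ℝ, ((‖|p.2 - p.1| ^ α‖₊ : ℝ≥0∞)) ^ (2:ℝ)
      = ENNReal.ofReal (|p.2 - p.1| ^ (α * 2)) := fun p => sq_norm_eq α _ (abs_nonneg _)
  simp only [hcg]
  exact aux_ker_lint T (α * 2) hT (by linarith)

lemma memL2_g (T α : ℝ) (hT : 0 ≤ T) (hα : -(1/2 : ℝ) < α) (hα0 : α ≤ 0) :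
    MemLp (fun p : ℝ × ℝ => (p.1 + p.2) ^ α) 2
      (volume.restrict (Set.Icc (0 : ℝ) T ×ˢ Set.Icc (0 : ℝ) T)) := by
  have hmeas : Measurable fun p : ℝ × ℝ => (p.1 + p.2) ^ α := by fun_prop
  refine ⟨hmeas.aestronglyMeasurable, ?_⟩
  rw [eLpNorm_lt_top_iff_lintegral_rpow_enorm_lt_top (by norm_num) (by norm_num)]
  simp only [enorm_eq_nnnorm]
  simp only [ENNReal.toReal_ofNat]
  set β := α * 2 with hβdef
  have hβ : -1 < β := by rw [hβdef]; linarith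
  have hβ0 : β ≤ 0 := by rw [hβdef]; linarith
  set sq := Set.Icc (0 : ℝ) T ×ˢ Set.Icc (0 : ℝ) T with hsq
  have hnull : (volume : Measure (ℝ × ℝ)) {p : ℝ × ℝ | p.1 = 0} = 0 := by
    have he : {p : ℝ × ℝ | p.1 = 0} = ({0} : Set ℝ) ×ˢ (Set.univ : Set ℝ) := by
      ext p
      simp only [Set.mem_setOf_eq, Set.mem_prod, Set.mem_singleton_iff, Set.mem_univ, and_true]
    rw [he, Measure.volume_eq_prod, Measure.prod_prod]
    simp
  have h0 : ∀ᵐ p : ℝ × ℝ ∂volume, p.1 ≠ 0 := by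
    rw [ae_iff]; simpa using hnull
  have hae : ∀ᵐ p ∂(volume.restrict sq),
      ((‖(p.1 + p.2) ^ α‖₊ : ℝ≥0∞)) ^ (2:ℝ) ≤ ENNReal.ofReal (p.1 ^ β) := by
    have hmem := ae_restrict_mem (μ := volume) (s := sq)
      ((measurableSet_Icc.prod measurableSet_Icc))
    filter_upwards [ae_restrict_of_ae h0, hmem] with p hp hpm
    have h1 : 0 < p.1 := lt_of_le_of_ne hpm.1.1 (Ne.symm hp)
    rw [sq_norm_eq α _ (by linarith [hpm.2.1] : (0:ℝ) ≤ p.1 + p.2)]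
    exact ENNReal.ofReal_le_ofReal
      (Real.rpow_le_rpow_of_nonpos h1 (le_add_of_nonneg_right hpm.2.1) hβ0)
  refine lt_of_le_of_lt (lintegral_mono_ae hae) ?_
  exact aux_strip_lint T β hT hβ

/-- Square integrability of the mixed sub-fractional kernel: if each
`H_i ∈ {1/2} ∪ (3/4,1)`, then the off-diagonal mixed second derivative
`(s,t) ↦ Σ_i b_i² H_i(2H_i−1)(|t−s|^{2H_i−2} − (s+t)^{2H_i−2})`
of the covariance `R(s,t) = Σ_i b_i² c_{H_i}(s,t)` is in `L²([0,T]²)`. -/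
theorem msfbm_kernel_memL2 (N : ℕ) (T : ℝ) (hT : 0 < T) (b H : Fin N → ℝ)
    (hH : ∀ i, H i ∈ Set.Ioo (0 : ℝ) 1)
    (hH' : ∀ i, H i = 1 / 2 ∨ H i ∈ Set.Ioo (3 / 4 : ℝ) 1) :
    MemLp
      (fun p : ℝ × ℝ => ∑ i, (b i) ^ 2 * H i * (2 * H i - 1) *
        (|p.2 - p.1| ^ (2 * H i - 2) - (p.1 + p.2) ^ (2 * H i - 2)))
      2 (volume.restrict (Set.Icc (0 : ℝ) T ×ˢ Set.Icc (0 : ℝ) T)) := by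
  apply memLp_finset_sum
  intro i _
  rcases hH' i with hi | hi
  · have hzero : (fun p : ℝ × ℝ => (b i) ^ 2 * H i * (2 * H i - 1) *
        (|p.2 - p.1| ^ (2 * H i - 2) - (p.1 + p.2) ^ (2 * H i - 2))) = fun _ => (0:ℝ) := by
      funext p; rw [hi]; ring
    rw [hzero]
    exact MemLp.zero'
  · have hf := memL2_f T (2 * H i - 2) hT.le (by linarith [hi.1])
    have hg := memL2_g T (2 * H i - 2) hT.le (by linarith [hi.1]) (by linarith [hi.2])
    exact (hf.sub hg).const_mul _
end
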